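/- arXiv:2205.08392 — 11 statements merged into one kernel-verified Lean document; each statement's English description precedes it below -/
import Mathlib

section
/- The polynomial σ**(x^a) = sum of bi-unitary divisors of x^a splits into linear factors over F_2 if and only if a = 2 or a = 2^α − 1 for some α ≥ 1. -/
open Polynomial

private lemma geom_mul_char2 (n : ℕ) :
    ((X : Polynomial (ZMod 2)) + 1) * (∑ i ∈ Finset.range n, X ^ i) = X ^ n + 1 := by
  have := geom_sum_mul (X : Polynomial (ZMod 2)) n
  rw [CharTwo.sub_eq_add, CharTwo.sub_eq_add] at this
  linear_combination this

private lemma splits_geom_iff (n : ℕ) :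
    (∑ i ∈ Finset.range n, (X : Polynomial (ZMod 2)) ^ i).Splits ↔
      n ≤ 1 ∨ ∃ k, n = 2 ^ k := by
  constructor
  · intro hs
    rcases le_or_gt n 1 with h1 | h1
    · exact Or.inl h1
    refine Or.inr ?_
    have hmon : (∑ i ∈ Finset.range n, (X : Polynomial (ZMod 2)) ^ i).Monic :=
      monic_geom_sum_X (by omega)
    -- all roots equal 1
    set P := ∑ i ∈ Finset.range n, (X : Polynomial (ZMod 2)) ^ i with hP
    have heval0 : P.eval 0 = 1 := by
      simp [hP, Finset.sum_ite_eq', Finset.mem_range, zero_pow_eq]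
      omega
    have hroots : ∀ r ∈ P.roots, r = 1 := by
      intro r hr
      have hr0 : P.eval r = 0 := (mem_roots hmon.ne_zero).1 hr
      have h01 : ∀ x : ZMod 2, x ≠ 0 → x = 1 := by decide
      refine h01 r fun h0 => ?_
      rw [h0, heval0] at hr0
      exact one_ne_zero hr0
    have hrep : P.roots = Multiset.replicate P.natDegree 1 := by
      rw [Multiset.eq_replicate]
      exact ⟨splits_iff_card_roots.1 hs, fun b hb => hroots b hb⟩
    have hfact : P = (X + 1) ^ P.natDegree := by
      have := hs.eq_prod_roots_of_monic hmon
      rw [hrep] at this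
      simpa [Multiset.map_replicate, Multiset.prod_replicate, CharTwo.sub_eq_add] using this
    have hkey : ((X : Polynomial (ZMod 2)) + 1) ^ n = X ^ n + 1 := by
      have h2 : ((X : Polynomial (ZMod 2)) + 1) ^ (P.natDegree + 1) = X ^ n + 1 := by
        rw [pow_succ', ← geom_mul_char2 n]
        rw [← hfact]
      have hdeg : P.natDegree + 1 = n := by
        have := congrArg natDegree h2
        have hX1 : ((X : Polynomial (ZMod 2)) + 1).natDegree = 1 := by
          simpa using natDegree_X_add_C (1 : ZMod 2)
        rw [natDegree_pow, hX1, mul_one] at this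
        rw [this]
        have hnd : ((X : Polynomial (ZMod 2)) ^ n + 1).natDegree = n := by
          have := natDegree_X_pow_add_C (R := ZMod 2) (n := n) (r := 1)
          simpa using this
        rw [hnd]
      rw [← h2, hdeg]
    -- now show n is a power of 2
    have hn0 : n ≠ 0 := by omega
    obtain ⟨m, hnm, hodd⟩ : ∃ m, n = 2 ^ (n.factorization 2) * m ∧ ¬ 2 ∣ m :=
      ⟨ordCompl[2] n, (Nat.ordProj_mul_ordCompl_eq_self n 2).symm,
        Nat.not_dvd_ordCompl Nat.prime_two hn0⟩
    set k := n.factorization 2 with hk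
    refine ⟨k, ?_⟩
    have hm0 : m ≠ 0 := by rintro rfl; rw [mul_zero] at hnm; exact hn0 hnm
    rcases Nat.lt_or_ge m 2 with hm1 | hm2
    · have : m = 1 := by omega
      rw [hnm, this, mul_one]
    · exfalso
      -- (X+1)^m = X^m + 1 via frobenius injectivity
      have hfr : ((X : Polynomial (ZMod 2)) + 1) ^ m = X ^ m + 1 := by
        have hinj : Function.Injective (frobenius (Polynomial (ZMod 2)) 2) :=
          frobenius_inj _ 2
        have hit := hinj.iterate k
        apply hit
        rw [iterate_frobenius, iterate_frobenius]
        have hmn : m * 2 ^ k = n := by rw [hnm]; ring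
        rw [add_pow_char_pow, one_pow, ← pow_mul, ← pow_mul, hmn]
        exact hkey
      have := congrArg (fun p => coeff p 1) hfr
      simp only [coeff_add, coeff_X_pow, coeff_one, coeff_X_add_one_pow, Nat.choose_one_right]
        at this
      rw [if_neg (by omega), if_neg (by omega), add_zero] at this
      exact hodd ((ZMod.natCast_eq_zero_iff m 2).1 this)
  · intro h
    rcases h with h1 | ⟨k, hk⟩
    · interval_cases n
      · simp
      · simpa using Splits.one
    · have hdvd : (∑ i ∈ Finset.range n, (X : Polynomial (ZMod 2)) ^ i) ∣ (X + 1) ^ n := by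
        refine ⟨X + 1, ?_⟩
        rw [mul_comm, geom_mul_char2, hk, add_pow_char_pow, one_pow]
      refine Splits.of_dvd ?_ (pow_ne_zero _ ?_) hdvd
      · exact Splits.pow (Splits.of_degree_le_one (by simpa using (degree_X_add_C (1 : ZMod 2)).le)) _
      · exact X_add_C_ne_zero 1

/-- The sum of the bi-unitary divisors of `T ^ a`, for `T` irreducible. -/
noncomputable def sigmaStarStarPow (T : Polynomial (ZMod 2)) (a : ℕ) : Polynomial (ZMod 2) :=
  if a = 0 then 1
  else if Even a then
    (1 + T) * (∑ i ∈ Finset.range (a / 2 + 1), T ^ i) * (∑ i ∈ Finset.range (a / 2), T ^ i)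
  else ∑ i ∈ Finset.range (a + 1), T ^ i

theorem sigmaStarStarPow_X_splits_iff (a : ℕ) (ha : 1 ≤ a) :
    ((sigmaStarStarPow (X : Polynomial (ZMod 2)) a).map (RingHom.id (ZMod 2))).Splits ↔
      a = 2 ∨ ∃ α : ℕ, 1 ≤ α ∧ a = 2 ^ α - 1 := by
  rw [map_id]
  rcases Nat.even_or_odd a with hae | hao
  · -- even case
    obtain ⟨n, han⟩ := hae
    have hae' : Even a := ⟨n, han⟩
    have hn1 : 1 ≤ n := by omega
    rw [sigmaStarStarPow, if_neg (by omega), if_pos hae', show a / 2 = n by omega]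
    have hP1 : (∑ i ∈ Finset.range (n + 1), (X : Polynomial (ZMod 2)) ^ i) ≠ 0 :=
      (monic_geom_sum_X (by omega)).ne_zero
    have hP2 : (∑ i ∈ Finset.range n, (X : Polynomial (ZMod 2)) ^ i) ≠ 0 :=
      (monic_geom_sum_X (by omega)).ne_zero
    have hX1 : ((1 : Polynomial (ZMod 2)) + X) ≠ 0 := by
      rw [add_comm]; exact X_add_C_ne_zero 1
    rw [splits_mul (mul_ne_zero hX1 hP1) hP2, splits_mul hX1 hP1,
      splits_geom_iff, splits_geom_iff]
    constructor
    · rintro ⟨⟨-, h1 | ⟨k, hk⟩⟩, h2⟩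
      · omega
      · -- n + 1 = 2 ^ k
        rcases h2 with h2 | ⟨j, hj⟩
        · left; omega
        · -- n = 2^j and n+1 = 2^k, n ≥ 1
          rcases Nat.eq_zero_or_pos j with rfl | hj1
          · left; omega
          rcases Nat.eq_zero_or_pos k with rfl | hk1
          · omega
          exfalso
          have hne : Even (2 ^ j) := (Nat.even_pow.2 ⟨even_two, by omega⟩)
          have hke : Even (2 ^ k) := (Nat.even_pow.2 ⟨even_two, by omega⟩)
          rw [← hj] at hne; rw [← hk] at hke
          rcases hne with ⟨x, hx⟩; rcases hke with ⟨y, hy⟩; omega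
    · rintro (h2 | ⟨α, hα, hval⟩)
      · have hne1 : n = 1 := by omega
        subst hne1
        refine ⟨⟨?_, Or.inr ⟨1, rfl⟩⟩, Or.inl le_rfl⟩
        exact Splits.of_degree_le_one (by simpa [add_comm] using (degree_X_add_C (1 : ZMod 2)).le)
      · exfalso
        have h1 : 1 ≤ 2 ^ α := Nat.one_le_two_pow
        have : a + 1 = 2 ^ α := by omega
        have : Even (2 ^ α) := Nat.even_pow.2 ⟨even_two, by omega⟩
        rcases this with ⟨y, hy⟩; omega
  · -- odd case
    rw [sigmaStarStarPow, if_neg (by omega), if_neg (Nat.not_even_iff_odd.2 hao),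
      splits_geom_iff]
    constructor
    · rintro (h1 | ⟨k, hk⟩)
      · omega
      · right
        refine ⟨k, ?_, by omega⟩
        rcases Nat.eq_zero_or_pos k with rfl | h
        · omega
        · exact h
    · rintro (rfl | ⟨α, hα, hval⟩)
      · rcases hao with ⟨x, hx⟩; omega
      · right
        have h1 : 1 ≤ 2 ^ α := Nat.one_le_two_pow
        exact ⟨α, by omega⟩
end

section
/- If A ∈ F_2[x] is a nonconstant polynomial with σ**(A) = A (bi-unitary perfect), then x(x+1) divides A; in particular A has at least two distinct irreducible factors. -/
open Polynomial

open scoped Classical in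
/-- `σ**`, the multiplicative function determined by `sigmaStarStarPow` on
prime powers, applied to the factorization of `A`. -/
noncomputable def sigmaStarStar (A : Polynomial (ZMod 2)) : Polynomial (ZMod 2) :=
  ∏ p ∈ (UniqueFactorizationMonoid.normalizedFactors A).toFinset,
    sigmaStarStarPow p ((UniqueFactorizationMonoid.normalizedFactors A).count p)

lemma units_eq_one_aux (u : (Polynomial (ZMod 2))ˣ) : u = 1 := by
  obtain ⟨r, hr, hC⟩ := Polynomial.isUnit_iff.mp u.isUnit
  lift r to (ZMod 2)ˣ using hr
  have hr1 : (r : ZMod 2) = 1 := by rw [Subsingleton.elim r 1, Units.val_one]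
  ext
  rw [← hC, hr1, map_one, Units.val_one]

instance : Subsingleton (Polynomial (ZMod 2))ˣ :=
  ⟨fun a b => by rw [units_eq_one_aux a, units_eq_one_aux b]⟩

lemma add_one_dvd_sigmaStarStarPow (T : Polynomial (ZMod 2)) {a : ℕ} (ha : a ≠ 0) :
    (T + 1) ∣ sigmaStarStarPow T a := by
  unfold sigmaStarStarPow
  rw [if_neg ha]
  split_ifs with he
  · exact dvd_mul_of_dvd_left (dvd_mul_of_dvd_left (by rw [add_comm]) _) _
  · have h2 : T + 1 = T - 1 := by rw [CharTwo.sub_eq_add]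
    have hcast : ((a + 1 : ℕ) : Polynomial (ZMod 2)) = 0 := by
      rw [CharP.cast_eq_zero_iff (Polynomial (ZMod 2)) 2]
      exact (Nat.even_add_one.mpr (by simpa [Nat.even_iff] using he)).two_dvd
    have hsum : ∑ i ∈ Finset.range (a + 1), T ^ i
        = ∑ i ∈ Finset.range (a + 1), (T ^ i - 1 ^ i) := by
      rw [Finset.sum_sub_distrib]
      simp [Finset.sum_const, hcast]
    rw [h2, hsum]
    exact Finset.dvd_sum fun i _ => sub_dvd_pow_sub_pow T 1 i

lemma eval_sigmaStarStarPow_eq_zero {T : Polynomial (ZMod 2)} {a : ℕ} (ha : a ≠ 0)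
    {c : ZMod 2} (hT : T.eval c = 1) : (sigmaStarStarPow T a).eval c = 0 := by
  unfold sigmaStarStarPow
  rw [if_neg ha]
  split_ifs with he
  · have h11 : (1 : ZMod 2) + 1 = 0 := by decide
    rw [eval_mul, eval_mul, eval_add, eval_one, hT, h11, zero_mul, zero_mul]
  · rw [eval_finset_sum]
    simp only [eval_pow, hT, one_pow, Finset.sum_const, Finset.card_range, nsmul_eq_mul, mul_one]
    rw [CharP.cast_eq_zero_iff (ZMod 2) 2]
    exact (Nat.even_add_one.mpr (by simpa [Nat.even_iff] using he)).two_dvd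

theorem x_mul_x_add_one_dvd_of_biunitary_perfect (A : Polynomial (ZMod 2))
    (hA : 0 < A.degree) (hperf : sigmaStarStar A = A) :
    (X * (X + 1) : Polynomial (ZMod 2)) ∣ A ∧
      2 ≤ (UniqueFactorizationMonoid.normalizedFactors A).toFinset.card := by
  classical
  set F := UniqueFactorizationMonoid.normalizedFactors A with hF
  set s := F.toFinset with hs
  have hA0 : A ≠ 0 := fun h => by simp [h] at hA
  have hAu : ¬ IsUnit A := fun h => by
    rw [Polynomial.degree_eq_zero_of_isUnit h] at hA; exact lt_irrefl _ hA
  have hcount : ∀ T ∈ s, F.count T ≠ 0 := fun T hT =>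
    Multiset.count_ne_zero.mpr (Multiset.mem_toFinset.mp hT)
  -- key divisibility: T + 1 divides A for every normalized factor T
  have key : ∀ T ∈ s, (T + 1) ∣ A := by
    intro T hT
    have h1 : (T + 1) ∣ sigmaStarStarPow T (F.count T) :=
      add_one_dvd_sigmaStarStarPow T (hcount T hT)
    have h2 : sigmaStarStarPow T (F.count T) ∣ sigmaStarStar A :=
      Finset.dvd_prod_of_mem _ hT
    rw [hperf] at h2
    exact h1.trans h2
  -- evaluation: if some factor evaluates to 1 at c, then A c = 0
  have evalkey : ∀ c : ZMod 2, (∃ T ∈ s, T.eval c = 1) → A.eval c = 0 := by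
    rintro c ⟨T, hT, h1⟩
    rw [← hperf]
    unfold sigmaStarStar
    rw [eval_prod]
    exact Finset.prod_eq_zero hT (eval_sigmaStarStarPow_eq_zero (hcount T hT) h1)
  have hne : s.Nonempty := by
    obtain ⟨p, hp⟩ := UniqueFactorizationMonoid.exists_mem_normalizedFactors hA0 hAu
    exact ⟨p, Multiset.mem_toFinset.mpr hp⟩
  have hXne : (X : Polynomial (ZMod 2)) ≠ X + 1 := by
    intro h
    exact one_ne_zero ((add_eq_left).mp h.symm)
  have hprimeX : Prime (X : Polynomial (ZMod 2)) := prime_X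
  have hprimeX1 : Prime (X + 1 : Polynomial (ZMod 2)) := by
    have h := prime_X_sub_C (1 : ZMod 2)
    rwa [CharTwo.sub_eq_add, map_one] at h
  have memiff : ∀ p : Polynomial (ZMod 2), Prime p → p ∣ A → p ∈ s := by
    intro p hp hd
    exact Multiset.mem_toFinset.mpr
      ((UniqueFactorizationMonoid.mem_normalizedFactors_iff hA0).mpr ⟨hp, hd⟩)
  have hirr : ∀ T ∈ s, Irreducible T := fun T hT =>
    (UniqueFactorizationMonoid.prime_of_normalized_factor T (Multiset.mem_toFinset.mp hT)).irreducible
  -- X divides A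
  have hXdvd : (X : Polynomial (ZMod 2)) ∣ A := by
    by_cases hall : ∀ T ∈ s, T = X
    · obtain ⟨T0, hT0⟩ := hne
      have h1 := key T0 hT0
      rw [hall T0 hT0] at h1
      have := hall _ (memiff _ hprimeX1 h1)
      exact absurd this.symm hXne
    · push_neg at hall
      obtain ⟨T, hT, hTX⟩ := hall
      have h0 : T.eval 0 = 1 := by
        by_contra h
        have h0' : T.eval 0 = 0 := by
          have : ∀ z : ZMod 2, z ≠ 1 → z = 0 := by decide
          exact this _ h
        have hd : (X : Polynomial (ZMod 2)) ∣ T := by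
          have := dvd_iff_isRoot.mpr h0'
          simpa using this
        have hassoc := hprimeX.irreducible.associated_of_dvd (hirr T hT) hd
        exact hTX (associated_iff_eq.mp hassoc).symm
      have hA0' : A.eval 0 = 0 := evalkey 0 ⟨T, hT, h0⟩
      rw [X_dvd_iff, coeff_zero_eq_eval_zero]
      exact hA0'
  -- X + 1 divides A
  have hX1dvd : (X + 1 : Polynomial (ZMod 2)) ∣ A := by
    by_cases hall : ∀ T ∈ s, T = X + 1
    · obtain ⟨T0, hT0⟩ := hne
      have h1 := key T0 hT0
      rw [hall T0 hT0] at h1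
      have hXA : (X : Polynomial (ZMod 2)) ∣ A := by
        have : (X + 1 + 1 : Polynomial (ZMod 2)) = X := by
          rw [add_assoc, CharTwo.add_self_eq_zero, add_zero]
        rwa [this] at h1
      have := hall _ (memiff _ hprimeX hXA)
      exact (hXne this).elim
    · push_neg at hall
      obtain ⟨T, hT, hTX⟩ := hall
      have h0 : T.eval 1 = 1 := by
        by_contra h
        have h0' : T.eval 1 = 0 := by
          have : ∀ z : ZMod 2, z ≠ 1 → z = 0 := by decide
          exact this _ h
        have hd : (X + 1 : Polynomial (ZMod 2)) ∣ T := by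
          have := dvd_iff_isRoot.mpr h0'
          rwa [CharTwo.sub_eq_add, map_one] at this
        have hassoc := hprimeX1.irreducible.associated_of_dvd (hirr T hT) hd
        exact hTX (associated_iff_eq.mp hassoc).symm
      have hA1 : A.eval 1 = 0 := evalkey 1 ⟨T, hT, h0⟩
      have := dvd_iff_isRoot.mpr hA1
      rwa [CharTwo.sub_eq_add, map_one] at this
  have hcop : IsCoprime (X : Polynomial (ZMod 2)) (X + 1) :=
    ⟨1, 1, by rw [one_mul, one_mul, ← add_assoc, CharTwo.add_self_eq_zero, zero_add]⟩
  refine ⟨hcop.mul_dvd hXdvd hX1dvd, ?_⟩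
  exact Finset.one_lt_card.mpr
    ⟨X, memiff _ hprimeX hXdvd, X + 1, memiff _ hprimeX1 hX1dvd, hXne⟩
end

section
/- If A = A₁A₂ ∈ F_2[x] is bi-unitary perfect with gcd(A₁, A₂) = 1, then A₁ is bi-unitary perfect if and only if A₂ is bi-unitary perfect. -/
open Polynomial

open UniqueFactorizationMonoid in
lemma sigmaStarStar_mul_coprime (A₁ A₂ : Polynomial (ZMod 2)) (h₁ : A₁ ≠ 0) (h₂ : A₂ ≠ 0)
    (hcop : IsCoprime A₁ A₂) :
    sigmaStarStar (A₁ * A₂) = sigmaStarStar A₁ * sigmaStarStar A₂ := by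
  classical
  have hM : normalizedFactors (A₁ * A₂) = normalizedFactors A₁ + normalizedFactors A₂ :=
    normalizedFactors_mul h₁ h₂
  have hdisj : Disjoint (normalizedFactors A₁).toFinset (normalizedFactors A₂).toFinset := by
    rw [Finset.disjoint_left]
    intro p hp1 hp2
    simp only [Multiset.mem_toFinset] at hp1 hp2
    have hprime : Prime p := prime_of_normalized_factor p hp1
    have hd1 : p ∣ A₁ := dvd_of_mem_normalizedFactors hp1
    have hd2 : p ∣ A₂ := dvd_of_mem_normalizedFactors hp2
    exact hprime.not_unit (hcop.isUnit_of_dvd' hd1 hd2)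
  have hnm1 : ∀ p ∈ (normalizedFactors A₁).toFinset, p ∉ normalizedFactors A₂ := by
    intro p hp
    have := Finset.disjoint_left.mp hdisj hp
    simpa only [Multiset.mem_toFinset] using this
  have hnm2 : ∀ p ∈ (normalizedFactors A₂).toFinset, p ∉ normalizedFactors A₁ := by
    intro p hp
    have := Finset.disjoint_right.mp hdisj hp
    simpa only [Multiset.mem_toFinset] using this
  unfold sigmaStarStar
  rw [hM, Multiset.toFinset_add, Finset.prod_union hdisj]
  congr 1
  · apply Finset.prod_congr rfl
    intro p hp
    rw [Multiset.count_add, Multiset.count_eq_zero_of_notMem (hnm1 p hp), add_zero]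
  · apply Finset.prod_congr rfl
    intro p hp
    rw [Multiset.count_add, Multiset.count_eq_zero_of_notMem (hnm2 p hp), zero_add]

theorem biunitary_perfect_iff_of_coprime_mul (A A₁ A₂ : Polynomial (ZMod 2))
    (hA : A = A₁ * A₂) (hcop : IsCoprime A₁ A₂) (hperf : sigmaStarStar A = A) :
    sigmaStarStar A₁ = A₁ ↔ sigmaStarStar A₂ = A₂ := by
  have hA0 : A ≠ 0 := by
    intro h
    rw [h] at hperf
    simp [sigmaStarStar, UniqueFactorizationMonoid.normalizedFactors_zero] at hperf
  have h₁ : A₁ ≠ 0 := fun h => hA0 (by simp [hA, h])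
  have h₂ : A₂ ≠ 0 := fun h => hA0 (by simp [hA, h])
  have hmul : sigmaStarStar A₁ * sigmaStarStar A₂ = A₁ * A₂ := by
    rw [← sigmaStarStar_mul_coprime A₁ A₂ h₁ h₂ hcop, ← hA, hperf, hA]
  constructor
  · intro h1
    rw [h1] at hmul
    exact mul_left_cancel₀ h₁ hmul
  · intro h2
    rw [h2] at hmul
    exact mul_right_cancel₀ h₂ hmul
end

section
/- If P is an irreducible polynomial over F_2 of the form 1 + x^a(x+1)^b (a Mersenne prime polynomial) satisfying P = P*, where P* is the reciprocal polynomial x^{deg P}·P(1/x), then P = 1+x+x^2 or P = 1+x+x^2+x^3+x^4. -/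
open Polynomial

lemma h2poly : (2:(ZMod 2)[X]) = 0 := by
  simpa using CharP.cast_eq_zero (ZMod 2)[X] 2

lemma X1ne : ((X:(ZMod 2)[X])+1) ≠ 0 := by
  intro h
  have := congrArg (Polynomial.eval 0) h
  simp at this

lemma natDeg_X1pow (b : ℕ) : (((X:(ZMod 2)[X])+1)^b).natDegree = b := by
  rw [natDegree_pow]
  have : ((X:(ZMod 2)[X]) + 1) = X + C 1 := by simp
  rw [this, natDegree_X_add_C, mul_one]

lemma natDeg_Q (a b : ℕ) : ((X:(ZMod 2)[X])^a*(X+1)^b).natDegree = a + b := by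
  rw [natDegree_mul (pow_ne_zero _ X_ne_zero) (pow_ne_zero _ X1ne), natDegree_X_pow,
    natDeg_X1pow]

lemma rev_X1pow (b : ℕ) : (((X:(ZMod 2)[X])+1)^b).reverse = (X+1)^b := by
  induction b with
  | zero => simp [reverse]
  | succ k ih =>
    rw [pow_succ, reverse_mul_of_domain, ih]
    congr 1
    unfold reverse
    have h1 : ((X:(ZMod 2)[X])+1).natDegree = 1 := by
      simpa using natDeg_X1pow 1
    have hX : (X:(ZMod 2)[X]) = X^1 := (pow_one X).symm
    have h1' : (1:(ZMod 2)[X]) = X ^ 0 := by simp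
    rw [h1, reflect_add]
    nth_rewrite 1 [hX]
    rw [reflect_monomial]
    conv_lhs => rw [h1']
    rw [reflect_monomial]
    simp [revAt_le, add_comm]

lemma natDeg_P (a b : ℕ) (ha : 1 ≤ a) :
    ((1:(ZMod 2)[X]) + X^a*(X+1)^b).natDegree = a + b := by
  rw [natDegree_add_eq_right_of_natDegree_lt, natDeg_Q]
  rw [natDeg_Q]; simpa using Or.inl (by omega : 0 < a)

lemma rev_P (a b : ℕ) (ha : 1 ≤ a) :
    ((1:(ZMod 2)[X]) + X^a*(X+1)^b).reverse = X^(a+b) + (X+1)^b := by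
  unfold reverse
  rw [natDeg_P a b ha, reflect_add]
  have h1 : reflect (a+b) (1:(ZMod 2)[X]) = X^(a+b) := by
    rw [← C_1, reflect_C]; simp
  rw [h1]
  congr 1
  rw [reflect_mul (X^a) ((X+1)^b) (le_of_eq (natDegree_X_pow a)) (le_of_eq (natDeg_X1pow b)),
    reflect_monomial, revAt_le (le_refl a), Nat.sub_self, pow_zero, one_mul]
  have := rev_X1pow b
  unfold reverse at this
  rwa [natDeg_X1pow] at this



lemma X1_dvd (k : ℕ) : ((X:(ZMod 2)[X])+1) ∣ X^k + 1 := by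
  have h := sub_dvd_pow_sub_pow (X:(ZMod 2)[X]) 1 k
  rw [one_pow] at h
  have e1 : (X:(ZMod 2)[X]) - 1 = X + 1 := by linear_combination -h2poly
  have e2 : (X:(ZMod 2)[X])^k - 1 = X^k + 1 := by linear_combination -h2poly
  rwa [e1, e2] at h

lemma X1sq_not_dvd (n : ℕ) (hn : n % 2 = 1) : ¬ ((X:(ZMod 2)[X])+1)^2 ∣ X^n + 1 := by
  intro hdvd
  obtain ⟨k, hk⟩ : ∃ k, n = 2*k+1 := ⟨n/2, by omega⟩
  have h1 : ((X:(ZMod 2)[X])+1)^2 ∣ (X^2)^k - 1 := by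
    have h := sub_dvd_pow_sub_pow ((X:(ZMod 2)[X])^2) 1 k
    rw [one_pow] at h
    have e : ((X:(ZMod 2)[X])^2 - 1) = (X+1)^2 := by linear_combination (-X-1) * h2poly
    rwa [e] at h
  have h2 : ((X:(ZMod 2)[X])+1)^2 ∣ X * ((X^2)^k - 1) := Dvd.dvd.mul_left h1 X
  have hx : (X:(ZMod 2)[X]) * (X^2)^k = X^n := by
    rw [← pow_mul, hk]
    ring
  have h3 : ((X:(ZMod 2)[X])+1)^2 ∣ (X+1) := by
    have he : (X:(ZMod 2)[X]) + 1 = (X^n + 1) - X*((X^2)^k - 1) := by linear_combination hx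
    have h4 : ((X:(ZMod 2)[X])+1)^2 ∣ (X^n + 1) - X*((X^2)^k - 1) := dvd_sub hdvd h2
    rwa [← he] at h4
  have hd := Polynomial.natDegree_le_of_dvd h3 X1ne
  rw [natDeg_X1pow 2] at hd
  have : ((X:(ZMod 2)[X])+1).natDegree = 1 := by simpa using natDeg_X1pow 1
  omega

lemma mixed_false (a b : ℕ) (ha : 1 ≤ a) (hb : 1 ≤ b) (hodd : (a+b) % 2 = 1)
    (key : ((X:(ZMod 2)[X])^a+1)*(X+1)^b = X^(a+b)+1) : False := by
  have hsq : ((X:(ZMod 2)[X])+1)^2 ∣ (X^a+1)*(X+1)^b := by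
    rcases le_or_gt 2 b with h2b | h2b
    · exact Dvd.dvd.mul_left (pow_dvd_pow _ h2b) _
    · have hae : a % 2 = 0 := by omega
      obtain ⟨a', ha'⟩ : ∃ a', a = a'*2 := ⟨a/2, by omega⟩
      have hsq' : (X:(ZMod 2)[X])^a + 1 = (X^a' + 1)^2 := by
        rw [ha', pow_mul]
        linear_combination (-(X:(ZMod 2)[X])^a') * h2poly
      have : ((X:(ZMod 2)[X])+1)^2 ∣ X^a + 1 := by
        rw [hsq']
        exact pow_dvd_pow_of_dvd (X1_dvd a') 2
      exact this.mul_right _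
  rw [key] at hsq
  exact X1sq_not_dvd (a+b) hodd hsq

lemma a_one (a b : ℕ) (ha : 1 ≤ a) (hb : 1 ≤ b) (hao : a % 2 = 1) (hbo : b % 2 = 1)
    (key : ((X:(ZMod 2)[X])^a+1)*(X+1)^b = X^(a+b)+1) : a = 1 := by
  obtain ⟨a', rfl⟩ : ∃ a', a = a'+1 := ⟨a-1, by omega⟩
  obtain ⟨b', rfl⟩ : ∃ b', b = b'+1 := ⟨b-1, by omega⟩
  have hd := congrArg derivative key
  simp only [derivative_mul, derivative_add, derivative_one, derivative_X_pow, derivative_pow,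
    derivative_X, add_zero, mul_one, Nat.add_sub_cancel] at hd
  have ca : ((a'+1 : ℕ) : ZMod 2) = 1 := by
    rw [← ZMod.natCast_mod, hao]; norm_num
  have cb : ((b'+1 : ℕ) : ZMod 2) = 1 := by
    rw [← ZMod.natCast_mod, hbo]; norm_num
  have cn : ((a'+1+(b'+1) : ℕ) : ZMod 2) = 0 := by
    rw [← ZMod.natCast_mod]
    have : (a'+1+(b'+1)) % 2 = 0 := by omega
    rw [this]; norm_num
  rw [ca, cb, cn, map_one, map_zero, one_mul, zero_mul] at hd
  have hfac : ((X:(ZMod 2)[X])+1)^b' * (X^a' + 1) = 0 := by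
    linear_combination hd - X^(a'+1)*(X+1)^b' * h2poly
  rcases mul_eq_zero.mp hfac with h | h
  · exact absurd h (pow_ne_zero _ X1ne)
  · by_contra hne
    have ha1 : 1 ≤ a' := by omega
    have := congrArg (fun p => Polynomial.coeff p 0) h
    simp only [coeff_add, coeff_X_pow, coeff_one, coeff_zero] at this
    rw [if_neg (by omega : ¬ (0:ℕ) = a')] at this
    simp at this
lemma sq_inj (p q : (ZMod 2)[X]) (h : p^2 = q^2) : p = q := by
  have hz : (p - q)^2 = 0 := by linear_combination h + (q^2 - p*q) * h2poly
  have := pow_eq_zero_iff (n := 2) (by norm_num) |>.mp hz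
  exact sub_eq_zero.mp this

lemma pow_two_of : ∀ n : ℕ, 1 ≤ n → ((X:(ZMod 2)[X])+1)^n = X^n+1 → ∃ u, n = 2^u := by
  intro n
  induction n using Nat.strong_induction_on with
  | _ n ih =>
    intro hn h
    rcases Nat.even_or_odd n with he | ho
    · obtain ⟨k, hk⟩ := he
      have hk1 : 1 ≤ k := by omega
      have hk' : n = k*2 := by omega
      rw [hk', pow_mul, pow_mul] at h
      have h' : (((X:(ZMod 2)[X])+1)^k)^2 = (X^k+1)^2 := by
        linear_combination h - (X^k) * h2poly
      obtain ⟨u, hu⟩ := ih k (by omega) hk1 (sq_inj _ _ h')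
      exact ⟨u+1, by rw [pow_succ, ← hu]; exact hk'⟩
    · rcases eq_or_lt_of_le hn with h1 | h1
      · exact ⟨0, by omega⟩
      · exfalso
        have hc := congrArg (fun p => Polynomial.coeff p 1) h
        simp only [coeff_X_add_one_pow, coeff_add, coeff_X_pow, coeff_one] at hc
        rw [if_neg (by omega : ¬ (1:ℕ) = n), if_neg (by omega : ¬ (1:ℕ) = 0)] at hc
        have : ((n.choose 1 : ℕ) : ZMod 2) = 1 := by
          rw [Nat.choose_one_right]
          rw [← ZMod.natCast_mod, Nat.odd_iff.mp ho]
          norm_num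
        rw [this] at hc
        simp at hc
lemma deg_le_of_dvd (P : (ZMod 2)[X]) (hP : Irreducible P) (m : ℕ) (hm : 1 ≤ m)
    (hdvd : P ∣ X^(2^m) - X) : P.natDegree ≤ m := by
  haveI := Fact.mk hP
  have hP0 : P ≠ 0 := hP.ne_zero
  let K := AdjoinRoot P
  let pb := AdjoinRoot.powerBasis hP0
  haveI : Module.Finite (ZMod 2) K := Module.Finite.of_basis pb.basis
  haveI : Finite K := Module.finite_of_finite (ZMod 2)
  haveI : Fintype K := Fintype.ofFinite K
  have hcard : Fintype.card K = 2 ^ P.natDegree := by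
    rw [Module.card_eq_pow_finrank (K := ZMod 2) (V := K), ZMod.card]
    congr 1
    rw [pb.finrank]
    rfl
  have hm2 : 1 < 2^m := Nat.one_lt_two_pow (by omega)
  -- root is fixed by x ^ 2^m
  have hroot : (AdjoinRoot.root P) ^ (2^m) = AdjoinRoot.root P := by
    obtain ⟨c, hc⟩ := hdvd
    have h0 : AdjoinRoot.mk P ((X:(ZMod 2)[X])^(2^m) - X) = 0 := by
      rw [hc, map_mul, AdjoinRoot.mk_self, zero_mul]
    rw [map_sub, map_pow, AdjoinRoot.mk_X, sub_eq_zero] at h0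
    exact h0
  haveI : CharP K 2 := charP_of_injective_algebraMap (algebraMap (ZMod 2) K).injective 2
  let φ : K →+* K := iterateFrobenius K 2 m
  let Φ : K →ₐ[ZMod 2] K :=
    { φ with commutes' := fun r =>
        RingHom.congr_fun (RingHom.ext_zmod (φ.comp (algebraMap (ZMod 2) K)) (algebraMap (ZMod 2) K)) r }
  have hΦ : Φ = AlgHom.id (ZMod 2) K := by
    apply AdjoinRoot.algHom_ext
    show φ (AdjoinRoot.root P) = AdjoinRoot.root P
    rw [iterateFrobenius_def]
    exact hroot
  have hall : ∀ x : K, x ^ (2^m) = x := by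
    intro x
    have := AlgHom.congr_fun hΦ x
    simpa [Φ, φ, iterateFrobenius_def] using this
  -- cardinality bound
  have hq0 : ((X:K[X])^(2^m) - X) ≠ 0 := FiniteField.X_pow_card_sub_X_ne_zero K hm2
  have hsub : Finset.univ ⊆ ((X:K[X])^(2^m) - X).roots.toFinset := by
    intro x _
    rw [Multiset.mem_toFinset, mem_roots hq0]
    simp [IsRoot, hall x, sub_eq_zero]
  have hle : Fintype.card K ≤ 2^m := by
    calc Fintype.card K = Finset.univ.card := (Finset.card_univ).symm
    _ ≤ ((X:K[X])^(2^m) - X).roots.toFinset.card := Finset.card_le_card hsub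
    _ ≤ Multiset.card ((X:K[X])^(2^m) - X).roots := Multiset.toFinset_card_le _
    _ ≤ ((X:K[X])^(2^m) - X).natDegree := Polynomial.card_roots' _
    _ = 2^m := FiniteField.X_pow_card_sub_X_natDegree_eq K hm2
  rw [hcard] at hle
  exact (Nat.pow_le_pow_iff_right (by norm_num)).mp hle

lemma two_mul_lt (u : ℕ) (hu : 3 ≤ u) : 2*u < 2^u := by
  induction u with
  | zero => omega
  | succ k ih =>
    rcases Nat.lt_or_ge k 3 with h | h
    · have hk : k = 2 := by omega
      subst hk; norm_num
    · have h1 := ih h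
      have h2 : 2 ≤ 2^k := by
        calc 2 = 2^1 := by norm_num
        _ ≤ 2^k := Nat.pow_le_pow_right (by norm_num) (by omega)
      rw [pow_succ]
      omega

theorem mersenne_self_reciprocal (P : Polynomial (ZMod 2)) (hP : Irreducible P)
    (hM : ∃ a b : ℕ, 1 ≤ a ∧ 1 ≤ b ∧ P = 1 + X ^ a * (X + 1) ^ b)
    (hrec : P.reverse = P) :
    P = 1 + X + X ^ 2 ∨ P = 1 + X + X ^ 2 + X ^ 3 + X ^ 4 := by
  obtain ⟨a, b, ha, hb, hPdef⟩ := hM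
  rw [hPdef, rev_P a b ha] at hrec
  have key : ((X:(ZMod 2)[X])^a+1)*(X+1)^b = X^(a+b)+1 := by
    linear_combination -hrec + ((X+1:(ZMod 2)[X])^b - 1)*h2poly
  -- exclude a, b both even
  have hnotboth : ¬ (a % 2 = 0 ∧ b % 2 = 0) := by
    rintro ⟨hae, hbe⟩
    obtain ⟨a2, ha2⟩ : ∃ a2, a = a2*2 := ⟨a/2, by omega⟩
    obtain ⟨b2, hb2⟩ : ∃ b2, b = b2*2 := ⟨b/2, by omega⟩
    have hR : P = (1 + X^a2*(X+1)^b2) * (1 + X^a2*(X+1)^b2) := by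
      rw [hPdef, ha2, hb2, pow_mul, pow_mul]
      linear_combination (-(X^a2*((X:(ZMod 2)[X])+1)^b2)) * h2poly
    rcases hP.2 hR with hu | hu <;>
    · have hd := Polynomial.natDegree_eq_zero_of_isUnit hu
      rw [natDeg_P a2 b2 (by omega)] at hd
      omega
  -- exclude mixed parity
  have hpar : a % 2 = 1 ∧ b % 2 = 1 := by
    rcases Nat.even_or_odd a with hae | hao <;> rcases Nat.even_or_odd b with hbe | hbo
    · exact absurd ⟨Nat.even_iff.mp hae, Nat.even_iff.mp hbe⟩ hnotboth
    · exact (mixed_false a b ha hb (by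
        have h1 := Nat.even_iff.mp hae
        have h2 := Nat.odd_iff.mp hbo
        omega) key).elim
    · exact (mixed_false a b ha hb (by
        have h1 := Nat.odd_iff.mp hao
        have h2 := Nat.even_iff.mp hbe
        omega) key).elim
    · exact ⟨Nat.odd_iff.mp hao, Nat.odd_iff.mp hbo⟩
  have ha1 : a = 1 := a_one a b ha hb hpar.1 hpar.2 key
  subst ha1
  -- (X+1)^(1+b) = X^(1+b) + 1
  have hpow : ((X:(ZMod 2)[X])+1)^(1+b) = X^(1+b)+1 := by
    rw [pow_add, pow_one]
    linear_combination key
  obtain ⟨u, hu⟩ := pow_two_of (1+b) (by omega) hpow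
  have hu1 : 1 ≤ u := by
    rcases Nat.eq_zero_or_pos u with h0 | h1
    · subst h0; simp at hu; omega
    · exact h1
  -- P * (X+1) = X^(2^u+1) + 1
  have hPdvd : P * (X+1) = X^((1+b)+1)+1 := by
    rw [hPdef]
    linear_combination X*hpow + X*h2poly
  have hdeg : P.natDegree = 1 + b := by
    rw [hPdef]; exact natDeg_P 1 b le_rfl
  -- case u ≥ 3 impossible
  have hule : u ≤ 2 := by
    by_contra hugt
    have hu3 : 3 ≤ u := by omega
    -- P divides X^(2^(2*u)) - X
    have hdvd1 : P ∣ (X:(ZMod 2)[X])^((1+b)+1) + 1 := ⟨X+1, hPdvd.symm⟩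
    have e3 := sub_dvd_pow_sub_pow ((X:(ZMod 2)[X])^((1+b)+1)) 1 (2^u - 1)
    rw [one_pow] at e3
    have e4 : ((X:(ZMod 2)[X])^((1+b)+1)) - 1 = X^((1+b)+1) + 1 := by
      linear_combination -h2poly
    rw [e4] at e3
    have hdvd2 : P ∣ ((X:(ZMod 2)[X])^((1+b)+1))^(2^u-1) - 1 := hdvd1.trans e3
    have hdvd3 : P ∣ (X:(ZMod 2)[X])^(2^(2*u)) - X := by
      have hexp : ((1+b)+1) * (2^u - 1) + 1 = 2^(2*u) := by
        rw [hu, two_mul, pow_add]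
        obtain ⟨s, hs⟩ : ∃ s, 2^u = s+1 := ⟨2^u - 1, by omega⟩
        rw [hs]
        simp only [Nat.add_sub_cancel]
        ring
      have : (X:(ZMod 2)[X])^(2^(2*u)) - X = X * (((X:(ZMod 2)[X])^((1+b)+1))^(2^u-1) - 1) := by
        rw [← pow_mul, ← hexp]
        ring
      rw [this]
      exact (hdvd2).mul_left X
    have hle := deg_le_of_dvd P hP (2*u) (by omega) hdvd3
    rw [hdeg, hu] at hle
    exact absurd hle (by have := two_mul_lt u hu3; omega)
  -- now u = 1 or u = 2
  interval_cases u
  · left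
    have hb1 : b = 1 := by omega
    rw [hPdef, hb1]
    ring
  · right
    have hb3 : b = 3 := by omega
    rw [hPdef, hb3]
    linear_combination ((X:(ZMod 2)[X])^3+X^2) * h2poly
end

section
/- If n ≥ 1 and σ(x^{2n}) = 1 + x + ... + x^{2n} is irreducible over F_2 and is of the form 1 + x^a(x+1)^b (a Mersenne prime), then 2n ∈ {2, 4}. -/
open Polynomial

private lemma aux_two_mul_lt_two_pow : ∀ k : ℕ, 3 ≤ k → 2 * k < 2 ^ k := by
  intro k hk
  induction k with
  | zero => omega
  | succ m ih =>
      rcases Nat.lt_or_ge m 3 with h | h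
      · interval_cases m <;> simp_all <;> omega
      · have := ih (by omega)
        have h2 : 2 ^ m ≥ 2 := Nat.one_lt_two_pow (by omega)
        calc 2 * (m + 1) = 2 * m + 2 := by ring
          _ < 2 ^ m + 2 ^ m := by omega
          _ = 2 ^ (m + 1) := by ring

private lemma aux_sq_inj (f g : Polynomial (ZMod 2)) (h : f ^ 2 = g ^ 2) : f = g := by
  have : (f - g) ^ 2 = 0 := by
    rw [sub_pow_char, h, sub_self]
  have := pow_eq_zero_iff (n := 2) (by norm_num) |>.mp this
  exact sub_eq_zero.mp this

private lemma aux_pow_two_of (m : ℕ) (hm : 1 ≤ m)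
    (h : ((X : Polynomial (ZMod 2)) + 1) ^ m = X ^ m + 1) : ∃ k, m = 2 ^ k := by
  induction m using Nat.strong_induction_on with
  | _ m ih =>
    rcases Nat.even_or_odd m with he | ho
    · obtain ⟨m', rfl⟩ := he
      have hm' : 1 ≤ m' := by omega
      have h2 : m' + m' = 2 * m' := by ring
      have hL : ((X : Polynomial (ZMod 2)) + 1) ^ (m' + m') = (((X : Polynomial (ZMod 2)) + 1) ^ m') ^ 2 := by
        rw [h2, mul_comm, pow_mul]
      have hR : (X : Polynomial (ZMod 2)) ^ (m' + m') + 1 = ((X : Polynomial (ZMod 2)) ^ m' + 1) ^ 2 := by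
        have h3 : m' * 2 = m' + m' := by ring
        rw [add_pow_char, one_pow, ← pow_mul, h3]
      rw [hL, hR] at h
      obtain ⟨k, hk⟩ := ih m' (by omega) hm' (aux_sq_inj _ _ h)
      exact ⟨k + 1, by rw [h2, hk]; ring⟩
    · rcases eq_or_ne m 1 with rfl | hm1
      · exact ⟨0, rfl⟩
      · exfalso
        have hc := congrArg (fun p => Polynomial.coeff p 1) h
        simp only [coeff_X_add_one_pow, coeff_add, coeff_X_pow, coeff_one,
          Nat.choose_one_right] at hc
        rw [if_neg (by omega), if_neg (by omega)] at hc
        have h2 : (2 : ℕ) ∣ m :=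
          (ZMod.natCast_eq_zero_iff m 2).mp (by simpa using hc)
        rcases ho with ⟨t, ht⟩
        omega

theorem sigma_x_pow_mersenne (n : ℕ) (hn : 1 ≤ n)
    (hirr : Irreducible (∑ i ∈ Finset.range (2 * n + 1), (X : Polynomial (ZMod 2)) ^ i))
    (hM : ∃ a b : ℕ, 1 ≤ a ∧ 1 ≤ b ∧ Nat.gcd a b = 1 ∧
      (∑ i ∈ Finset.range (2 * n + 1), (X : Polynomial (ZMod 2)) ^ i) =
        1 + X ^ a * (X + 1) ^ b) :
    2 * n = 2 ∨ 2 * n = 4 := by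
  obtain ⟨a, b, ha, hb, hco, heq⟩ := hM
  set σ : Polynomial (ZMod 2) := ∑ i ∈ Finset.range (2 * n + 1), X ^ i with hσdef
  set τ : Polynomial (ZMod 2) := ∑ i ∈ Finset.range (2 * n), X ^ i with hτdef
  have hXm1 : (X : Polynomial (ZMod 2)) - 1 = X + 1 := by
    rw [sub_eq_add_neg, CharTwo.neg_eq]
  have hστ : σ = X * τ + 1 := geom_sum_succ
  -- key product identity
  have hprod : (X : Polynomial (ZMod 2)) ^ a * (X + 1) ^ b = X * τ := by
    have := heq
    rw [hστ, add_comm (1 : Polynomial (ZMod 2))] at this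
    exact (add_right_cancel this).symm
  -- τ coeff 0 = 1
  have hτ0 : τ.coeff 0 = 1 := by
    rw [hτdef, Polynomial.finset_sum_coeff]
    simp only [coeff_X_pow]
    rw [Finset.sum_ite_eq]
    simp only [Finset.mem_range, if_pos (by omega : 0 < 2 * n)]
  -- a = 1
  have ha1 : a = 1 := by
    by_contra hne
    have ha2 : 2 ≤ a := by omega
    have h1 : ((X : Polynomial (ZMod 2)) ^ a * (X + 1) ^ b).coeff 1 = 0 := by
      rw [mul_comm, coeff_mul_X_pow', if_neg (by omega)]
    have h2 : ((X : Polynomial (ZMod 2)) * τ).coeff 1 = 1 := by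
      rw [mul_comm, show (1 : ℕ) = 0 + 1 from rfl, coeff_mul_X, hτ0]
    rw [hprod, h2] at h1
    exact one_ne_zero h1
  subst ha1
  rw [pow_one] at hprod
  have hbτ : ((X : Polynomial (ZMod 2)) + 1) ^ b = τ :=
    mul_left_cancel₀ X_ne_zero hprod
  -- (X+1)^(b+1) = X^(2n) + 1
  have hkey : ((X : Polynomial (ZMod 2)) + 1) ^ (b + 1) = X ^ (2 * n) + 1 := by
    have hg : τ * ((X : Polynomial (ZMod 2)) - 1) = X ^ (2 * n) - 1 := geom_sum_mul X (2 * n)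
    rw [hXm1] at hg
    rw [pow_succ, hbτ, hg, sub_eq_add_neg, CharTwo.neg_eq]
  -- degrees: b + 1 = 2n
  have hdegL : (((X : Polynomial (ZMod 2)) + 1) ^ (b + 1)).natDegree = b + 1 := by
    rw [natDegree_pow, show ((X : Polynomial (ZMod 2)) + 1) = X + C 1 by rw [map_one],
      natDegree_X_add_C, mul_one]
  have hdegR : ((X : Polynomial (ZMod 2)) ^ (2 * n) + 1).natDegree = 2 * n := by
    rw [show (1 : Polynomial (ZMod 2)) = C 1 by rw [map_one]]
    exact natDegree_X_pow_add_C
  have hb2n : b + 1 = 2 * n := by rw [← hdegL, hkey, hdegR]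
  rw [hb2n] at hkey
  -- 2n is a power of two
  obtain ⟨k, hk⟩ := aux_pow_two_of (2 * n) (by omega) hkey
  have hk1 : 1 ≤ k := by
    by_contra h
    interval_cases k <;> omega
  -- field theory part
  have hmon : σ.Monic := monic_geom_sum_X (by omega)
  have hfact : Fact (Irreducible σ) := ⟨hirr⟩
  letI : Field (AdjoinRoot σ) := AdjoinRoot.instField
  set μ : AdjoinRoot σ := AdjoinRoot.root σ with hμdef
  have haev : (aeval μ) σ = 0 := by
    rw [AdjoinRoot.aeval_eq, AdjoinRoot.mk_self]
  have hmul : σ * ((X : Polynomial (ZMod 2)) - 1) = X ^ (2 * n + 1) - 1 :=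
    geom_sum_mul X (2 * n + 1)
  have hμp : μ ^ (2 * n + 1) = 1 := by
    have := congrArg (aeval μ) hmul
    simp only [map_mul, map_sub, map_pow, aeval_X, map_one, haev, zero_mul] at this
    exact (sub_eq_zero.mp this.symm)
  -- μ ^ (2 ^ (2k)) = μ
  obtain ⟨M, hM2⟩ : ∃ M, 2 ^ k = M + 1 := ⟨2 ^ k - 1, by have := Nat.one_le_two_pow (n := k); omega⟩
  have h2n2k : 2 ^ (2 * k) = M * (2 * n + 1) + 1 := by
    have h4 : 2 ^ (2 * k) = 2 ^ k * 2 ^ k := by rw [two_mul, pow_add]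
    have h5 : 2 * n + 1 = M + 2 := by omega
    rw [h4, hM2, h5]; ring
  have hμfix : μ ^ 2 ^ (2 * k) = μ := by
    rw [h2n2k, pow_succ, mul_comm M, pow_mul, hμp, one_pow, one_mul]
  -- minpoly
  have hminμ : minpoly (ZMod 2) μ = σ :=
    (minpoly.eq_of_irreducible_of_monic hirr haev hmon).symm
  have hdvd : σ ∣ (X : Polynomial (ZMod 2)) ^ 2 ^ (2 * k) - X := by
    rw [← hminμ]
    apply minpoly.dvd
    simp [hμfix]
  -- splitting field
  have hne0 : ((X : Polynomial (ZMod 2)) ^ 2 ^ (2 * k) - X) ≠ 0 :=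
    FiniteField.X_pow_card_pow_sub_X_ne_zero _ (by omega) (by norm_num)
  have hsplits : Splits (((X : Polynomial (ZMod 2)) ^ 2 ^ (2 * k) - X).map
      (algebraMap (ZMod 2) (GaloisField 2 (2 * k)))) :=
    SplittingField.splits ((X : Polynomial (ZMod 2)) ^ 2 ^ (2 * k) - X)
  have hsplitσ : Splits (σ.map (algebraMap (ZMod 2) (GaloisField 2 (2 * k)))) :=
    hsplits.of_dvd ((Polynomial.map_ne_zero_iff (algebraMap (ZMod 2) _).injective).mpr hne0)
      (Polynomial.map_dvd _ hdvd)
  -- degree of σ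
  have hdegσ : σ.natDegree = 2 * n := by
    have h1 := congrArg natDegree hmul
    rw [show ((X : Polynomial (ZMod 2)) - 1) = X - C 1 by rw [map_one],
      natDegree_mul hmon.ne_zero (X_sub_C_ne_zero 1), natDegree_X_sub_C,
      show ((X : Polynomial (ZMod 2)) ^ (2 * n + 1) - 1) = X ^ (2 * n + 1) - C 1 by rw [map_one],
      natDegree_X_pow_sub_C] at h1
    omega
  have hdeg0 : σ.degree ≠ 0 := by
    have : 0 < σ.natDegree := by omega
    exact (natDegree_pos_iff_degree_pos.mp this).ne'
  obtain ⟨y, hy⟩ := hsplitσ.exists_eval_eq_zero (by rwa [degree_map])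
  have hyaev : (aeval y) σ = 0 := by rwa [aeval_def, ← eval_map]
  have hminy : minpoly (ZMod 2) y = σ :=
    (minpoly.eq_of_irreducible_of_monic hirr hyaev hmon).symm
  have hle : σ.natDegree ≤ Module.finrank (ZMod 2) (GaloisField 2 (2 * k)) := by
    rw [← hminy]; exact minpoly.natDegree_le y
  rw [GaloisField.finrank 2 (show 2 * k ≠ 0 by omega), hdegσ, hk] at hle
  -- 2^k ≤ 2k forces k ≤ 2
  have hk2 : k ≤ 2 := by
    by_contra h
    exact absurd hle (not_le.mpr (aux_two_mul_lt_two_pow k (by omega)))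
  interval_cases k
  · left; omega
  · right; omega
end

section
/- For n ∈ ℕ*, if 1 + x + ... + x^n = 1 + (x+1) + ... + (x+1)^n in F_2[x], then n = 2^h − 2 for some h ≥ 1. -/
open Polynomial

lemma pow_two_of_add_one_pow : ∀ m : ℕ, 1 ≤ m →
    ((X : Polynomial (ZMod 2)) + 1) ^ m = X ^ m + 1 → ∃ k, m = 2 ^ k := by
  intro m
  induction m using Nat.strong_induction_on with
  | _ m ih =>
  intro hm heq
  have htwo : (2 : Polynomial (ZMod 2)) = 0 := by
    exact_mod_cast CharP.cast_eq_zero (Polynomial (ZMod 2)) 2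
  rcases Nat.even_or_odd m with ⟨k, hk⟩ | hodd
  · have hk2 : m = 2 * k := by omega
    have hk1 : 1 ≤ k := by omega
    have hsq : (((X : Polynomial (ZMod 2)) + 1) ^ k - (X ^ k + 1)) ^ 2 = 0 := by
      have h1 : (((X : Polynomial (ZMod 2)) + 1) ^ k) ^ 2 = (X ^ k + 1) ^ 2 := by
        have e1 : (((X : Polynomial (ZMod 2)) + 1) ^ k) ^ 2 = (X + 1) ^ m := by
          rw [hk2, pow_mul']
        have e2 : ((X : Polynomial (ZMod 2)) ^ k + 1) ^ 2 = X ^ m + 2 * X ^ k + 1 := by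
          rw [hk2]; ring
        rw [e1, heq, e2, htwo]; ring
      linear_combination h1 + (X ^ k + 1 - (X + 1) ^ k) * ((X:Polynomial (ZMod 2))^k + 1) * htwo
    have h0 : ((X : Polynomial (ZMod 2)) + 1) ^ k - (X ^ k + 1) = 0 :=
      pow_eq_zero_iff (two_ne_zero) |>.mp hsq
    obtain ⟨j, hj⟩ := ih k (by omega) hk1 (by linear_combination h0)
    exact ⟨j + 1, by rw [hk2, hj, pow_succ, mul_comm]⟩
  · rcases eq_or_lt_of_le hm with h1 | h3
    · exact ⟨0, by omega⟩
    · exfalso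
      have hc := congrArg (fun p => Polynomial.coeff p (m - 1)) heq
      simp only [coeff_X_add_one_pow, coeff_add, coeff_X_pow, coeff_one] at hc
      have hne : ¬ (m - 1 = m) := by omega
      have hne0 : ¬ (m - 1 = 0) := by omega
      rw [if_neg hne, if_neg hne0, add_zero] at hc
      rw [Nat.choose_symm (by omega : 1 ≤ m), Nat.choose_one_right] at hc
      rw [ZMod.natCast_eq_zero_iff] at hc
      rcases hodd with ⟨t, ht⟩
      omega

theorem sigma_eq_sigma_shift (n : ℕ) (hn : 1 ≤ n)
    (h : (∑ i ∈ Finset.range (n + 1), (X : Polynomial (ZMod 2)) ^ i) =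
      ∑ i ∈ Finset.range (n + 1), ((X : Polynomial (ZMod 2)) + 1) ^ i) :
    ∃ h' : ℕ, 1 ≤ h' ∧ n = 2 ^ h' - 2 := by
  have htwo : (2 : Polynomial (ZMod 2)) = 0 := by
    exact_mod_cast CharP.cast_eq_zero (Polynomial (ZMod 2)) 2
  have eq1 := geom_sum_mul (X : Polynomial (ZMod 2)) (n + 1)
  have eq2 := geom_sum_mul ((X : Polynomial (ZMod 2)) + 1) (n + 1)
  rw [← h] at eq2
  have key : ((X : Polynomial (ZMod 2)) + 1) ^ (n + 2) = X ^ (n + 2) + 1 := by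
    linear_combination (X : Polynomial (ZMod 2)) * eq1 - (X + 1) * eq2 +
      ((∑ i ∈ Finset.range (n + 1), (X : Polynomial (ZMod 2)) ^ i) * X) * htwo
  obtain ⟨k, hk⟩ := pow_two_of_add_one_pow (n + 2) (by omega) key
  have hk2 : 2 ≤ k := by
    by_contra hc
    interval_cases k <;> omega
  exact ⟨k, by omega, by omega⟩
end

section
/- For any m ≥ 1 and any Mersenne prime polynomial M over F_2, the polynomials σ(x^{2m}), σ((x+1)^{2m}), and σ(M^{2m}) are odd (coprime to x(x+1)) and squarefree. -/
open Polynomial Finset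

private lemma hgeom2 (P : Polynomial (ZMod 2)) (n : ℕ) :
    (P + 1) * ∑ i ∈ range n, P ^ i = P ^ n + 1 := by
  rw [mul_comm, ← CharTwo.sub_eq_add P 1, geom_sum_mul, CharTwo.sub_eq_add]

private lemma key_id2 (P : Polynomial (ZMod 2)) (hP : P + 1 ≠ 0) (m : ℕ) :
    ∑ i ∈ range (2 * m + 1), P ^ i
      = P * (P + 1) * (∑ i ∈ range m, P ^ i) ^ 2 + 1 := by
  apply mul_left_cancel₀ hP
  rw [hgeom2]
  have e1 : (P + 1) * (P * (P + 1) * (∑ i ∈ range m, P ^ i) ^ 2 + 1)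
      = P * ((P + 1) * ∑ i ∈ range m, P ^ i) ^ 2 + (P + 1) := by ring
  rw [e1, hgeom2]
  have e2 : (P ^ m + 1) ^ 2 = P ^ (2 * m) + 1 := by
    rw [add_pow_char, one_pow, ← pow_mul, mul_comm]
  rw [e2]
  linear_combination (-P) * (CharTwo.two_eq_zero (R := Polynomial (ZMod 2)))

private lemma cop_aux2 (m : ℕ) (P Q : Polynomial (ZMod 2)) (hP : P + 1 ≠ 0)
    (hQ : P * (P + 1) = X * (X + 1) * Q) :
    IsCoprime (∑ i ∈ range (2 * m + 1), P ^ i) (X * (X + 1)) := by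
  refine ⟨1, Q * (∑ i ∈ range m, P ^ i) ^ 2, ?_⟩
  have hid := key_id2 P hP m
  linear_combination hid + (∑ i ∈ range m, P ^ i) ^ 2 * hQ
    + Q * (∑ i ∈ range m, P ^ i) ^ 2 * X * (X + 1)
      * (CharTwo.two_eq_zero (R := Polynomial (ZMod 2)))

private lemma sqf_aux2 (m : ℕ) (P : Polynomial (ZMod 2)) (hP : P + 1 ≠ 0)
    (hder : IsCoprime (∑ i ∈ range (2 * m + 1), P ^ i) P.derivative) :
    Squarefree (∑ i ∈ range (2 * m + 1), P ^ i) := by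
  have hid := key_id2 P hP m
  have hT : IsCoprime (∑ i ∈ range (2 * m + 1), P ^ i) ((∑ i ∈ range m, P ^ i) ^ 2) := by
    refine ⟨1, P * (P + 1), ?_⟩
    linear_combination hid + P * (P + 1) * (∑ i ∈ range m, P ^ i) ^ 2
      * (CharTwo.two_eq_zero (R := Polynomial (ZMod 2)))
  have hd : derivative (∑ i ∈ range (2 * m + 1), P ^ i)
      = P.derivative * (∑ i ∈ range m, P ^ i) ^ 2 := by
    rw [hid]
    simp only [derivative_add, derivative_mul, derivative_one, derivative_pow,
      Nat.cast_ofNat, add_zero]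
    rw [show (C (2 : ZMod 2)) = 0 by rw [show (2:ZMod 2) = 0 from rfl]; exact map_zero C,
      zero_mul, zero_mul, mul_zero, add_zero]
    linear_combination (P * derivative P * (∑ i ∈ range m, P ^ i) ^ 2)
      * (CharTwo.two_eq_zero (R := Polynomial (ZMod 2)))
  have hsep : (∑ i ∈ range (2 * m + 1), P ^ i).Separable := by
    rw [Polynomial.Separable, hd]
    exact hder.mul_right hT
  exact hsep.squarefree

theorem sigma_even_pow_odd_squarefree (m : ℕ) (hm : 1 ≤ m) (M : Polynomial (ZMod 2))
    (hirr : Irreducible M)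
    (hM : ∃ a b : ℕ, 1 ≤ a ∧ 1 ≤ b ∧ M = 1 + X ^ a * (X + 1) ^ b) :
    (IsCoprime (∑ i ∈ Finset.range (2 * m + 1), (X : Polynomial (ZMod 2)) ^ i)
        (X * (X + 1)) ∧
      Squarefree (∑ i ∈ Finset.range (2 * m + 1), (X : Polynomial (ZMod 2)) ^ i)) ∧
    (IsCoprime (∑ i ∈ Finset.range (2 * m + 1), ((X : Polynomial (ZMod 2)) + 1) ^ i)
        (X * (X + 1)) ∧
      Squarefree (∑ i ∈ Finset.range (2 * m + 1), ((X : Polynomial (ZMod 2)) + 1) ^ i)) ∧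
    (IsCoprime (∑ i ∈ Finset.range (2 * m + 1), M ^ i) (X * (X + 1)) ∧
      Squarefree (∑ i ∈ Finset.range (2 * m + 1), M ^ i)) := by
  have h2 : (2 : Polynomial (ZMod 2)) = 0 := CharTwo.two_eq_zero
  have hX1 : (X : Polynomial (ZMod 2)) + 1 ≠ 0 := fun h => by
    simpa using congrArg (eval 0) h
  obtain ⟨a, b, ha, hb, hMeq⟩ := hM
  -- case X
  refine ⟨⟨cop_aux2 m X 1 hX1 (mul_one _).symm,
      sqf_aux2 m X hX1 (by rw [derivative_X]; exact isCoprime_one_right)⟩, ?_, ?_⟩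
  -- case X + 1
  · have hXX : ((X : Polynomial (ZMod 2)) + 1) + 1 = X := by linear_combination h2
    have hPne : ((X : Polynomial (ZMod 2)) + 1) + 1 ≠ 0 := by rw [hXX]; exact X_ne_zero
    refine ⟨cop_aux2 m (X + 1) 1 hPne (by rw [hXX]; ring),
      sqf_aux2 m (X + 1) hPne
        (by rw [show derivative ((X : Polynomial (ZMod 2)) + 1) = 1 by simp]
            exact isCoprime_one_right)⟩
  -- case M
  · have hM1 : M + 1 = X ^ a * (X + 1) ^ b := by rw [hMeq]; linear_combination h2
    have hMne : M + 1 ≠ 0 := by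
      rw [hM1]; exact mul_ne_zero (pow_ne_zero _ X_ne_zero) (pow_ne_zero _ hX1)
    have haa : X ^ a = X ^ (a - 1) * (X : Polynomial (ZMod 2)) := by
      rw [← pow_succ]; congr 1; omega
    have hbb : ((X : Polynomial (ZMod 2)) + 1) ^ b = (X + 1) ^ (b - 1) * (X + 1) := by
      rw [← pow_succ]; congr 1; omega
    have hQM : M * (M + 1) = X * (X + 1) * (M * (X ^ (a - 1) * (X + 1) ^ (b - 1))) := by
      rw [hM1, haa, hbb]; ring
    have hcM := cop_aux2 m M _ hMne hQM
    have hxM : IsCoprime (∑ i ∈ range (2 * m + 1), M ^ i) X := hcM.of_mul_right_left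
    have hyM : IsCoprime (∑ i ∈ range (2 * m + 1), M ^ i) (X + 1) := hcM.of_mul_right_right
    have hD : M.derivative = C (a : ZMod 2) * (X ^ (a - 1) * (X + 1) ^ b)
        + C (b : ZMod 2) * (X ^ a * (X + 1) ^ (b - 1)) := by
      rw [hMeq]
      simp only [derivative_add, derivative_one, derivative_mul, derivative_pow,
        derivative_X, zero_add]
      ring
    have hpar : ¬((a : ZMod 2) = 0 ∧ (b : ZMod 2) = 0) := by
      rintro ⟨ha0, hb0⟩
      obtain ⟨k, hk⟩ := (ZMod.natCast_eq_zero_iff a 2).1 ha0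
      obtain ⟨l, hl⟩ := (ZMod.natCast_eq_zero_iff b 2).1 hb0
      have hNsq : M = (1 + X ^ k * (X + 1) ^ l) * (1 + X ^ k * (X + 1) ^ l) := by
        rw [hMeq, hk, hl, show X ^ (2 * k) = (X ^ k) ^ 2 * (1:Polynomial (ZMod 2)) by
            rw [← pow_mul, mul_comm k 2, mul_one],
          show ((X : Polynomial (ZMod 2)) + 1) ^ (2 * l) = ((X + 1) ^ l) ^ 2 by
            rw [← pow_mul, mul_comm l 2]]
        linear_combination (-(X ^ k * (X + 1) ^ l)) * h2
      have hU : IsUnit (1 + X ^ k * (X + 1) ^ l : Polynomial (ZMod 2)) := by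
        rcases hirr.isUnit_or_isUnit hNsq with h | h <;> exact h
      have hmon1 : ((X : Polynomial (ZMod 2)) + 1).Monic := by
        simpa using monic_X_add_C (1 : ZMod 2)
      have hZ : (X ^ k * (X + 1) ^ l : Polynomial (ZMod 2)).Monic :=
        (monic_X_pow k).mul (hmon1.pow l)
      have hZdeg : (X ^ k * (X + 1) ^ l : Polynomial (ZMod 2)).natDegree = k + l := by
        have hd1 : ((X : Polynomial (ZMod 2)) + 1).natDegree = 1 := by
          simpa using natDegree_X_add_C (1 : ZMod 2)
        rw [natDegree_mul (pow_ne_zero _ X_ne_zero) (pow_ne_zero _ hX1),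
          natDegree_pow, natDegree_pow, natDegree_X, hd1, mul_one, mul_one]
      have hcoeff : (1 + X ^ k * (X + 1) ^ l : Polynomial (ZMod 2)).coeff (k + l) = 1 := by
        rw [coeff_add, coeff_one, if_neg (by omega : ¬(k + l = 0)), zero_add, ← hZdeg]
        exact hZ.coeff_natDegree
      have h0 : (1 + X ^ k * (X + 1) ^ l : Polynomial (ZMod 2)).coeff (k + l) = 0 :=
        coeff_eq_zero_of_natDegree_lt (by rw [natDegree_eq_zero_of_isUnit hU]; omega)
      rw [h0] at hcoeff
      exact one_ne_zero hcoeff.symm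
    have hdvd : M.derivative ∣ X ^ a * (X + 1) ^ b := by
      have hval : ∀ c : ZMod 2, c = 0 ∨ c = 1 := by decide
      rcases hval (a : ZMod 2) with h1 | h1 <;> rcases hval (b : ZMod 2) with hb1 | hb1
      · exact absurd ⟨h1, hb1⟩ hpar
      · refine ⟨X + 1, ?_⟩
        rw [hD, h1, hb1, map_zero, map_one, hbb]; ring
      · refine ⟨X, ?_⟩
        rw [hD, h1, hb1, map_zero, map_one, haa]; ring
      · refine ⟨X * (X + 1), ?_⟩
        rw [hD, h1, hb1, map_one, haa, hbb]
        linear_combination (-(X ^ (a-1) * (X + 1) ^ (b-1) * X ^ 2 * (X + 1))) * h2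
    have hderM : IsCoprime (∑ i ∈ range (2 * m + 1), M ^ i) M.derivative :=
      ((hxM.pow_right).mul_right (hyM.pow_right)).of_isCoprime_of_dvd_right hdvd
    exact ⟨hcM, sqf_aux2 m M hMne hderM⟩
end

section
/- The polynomial 1 + x(x+1)^{2^ν − 1} over F_2 is irreducible if and only if ν ∈ {1, 2}. -/
open Polynomial

-- basic char-2 fact
lemma two_eq_zero_poly : (2 : (ZMod 2)[X]) = 0 := by
  have : ((2 : ℕ) : (ZMod 2)[X]) = 0 := CharP.cast_eq_zero ((ZMod 2)[X]) 2
  simpa using this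

lemma quad_eq {K : Type*} [Field K] (p : K[X]) (hm : p.Monic) (hd : p.natDegree = 2) :
    p = X ^ 2 + C (p.coeff 1) * X + C (p.coeff 0) := by
  have h2 : p.coeff 2 = 1 := by
    have := hm.coeff_natDegree
    rwa [hd] at this
  ext n
  rcases n with _ | _ | _ | n
  · simp
  · simp
  · simp [h2, coeff_X_pow]
  · rw [coeff_eq_zero_of_natDegree_lt (by omega)]
    simp [coeff_X_pow, coeff_C]

lemma two_mul_lt_s12 (ν : ℕ) (h : 3 ≤ ν) : 2 * ν < 2 ^ ν := by
  induction ν with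
  | zero => omega
  | succ n ih =>
    rcases Nat.lt_or_ge n 3 with h3 | h3
    · have : n = 2 := by omega
      subst this
      norm_num
    · have h1 := ih h3
      have h2 : 2 ≤ 2 ^ n := by
        calc 2 = 2 ^ 1 := by norm_num
        _ ≤ 2 ^ n := Nat.pow_le_pow_right (by norm_num) (by omega)
      have : 2 ^ (n + 1) = 2 ^ n + 2 ^ n := by ring
      omega

lemma key_identity (ν : ℕ) (hν : 1 ≤ ν) :
    (X + 1) * (1 + X * (X + 1) ^ (2 ^ ν - 1) : (ZMod 2)[X])
      = X ^ (2 ^ ν + 1) - 1 := by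
  have h2 := two_eq_zero_poly
  have hk : 2 ^ ν - 1 + 1 = 2 ^ ν := Nat.succ_pred_eq_of_pos (Nat.two_pow_pos ν)
  have hpow : ((X + 1 : (ZMod 2)[X])) ^ (2 ^ ν) = X ^ (2 ^ ν) + 1 := by
    have := add_pow_char_pow (R := (ZMod 2)[X]) (p := 2) (n := ν) (x := X) (y := 1)
    simpa using this
  calc (X + 1) * (1 + X * (X + 1) ^ (2 ^ ν - 1) : (ZMod 2)[X])
      = (X + 1) + X * ((X + 1) ^ (2 ^ ν - 1) * (X + 1)) := by ring
    _ = (X + 1) + X * (X + 1) ^ (2 ^ ν) := by rw [← pow_succ, hk]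
    _ = (X + 1) + X * (X ^ (2 ^ ν) + 1) := by rw [hpow]
    _ = X ^ (2 ^ ν + 1) - 1 := by
        rw [pow_succ]
        linear_combination (X + 1) * h2

lemma rootless_quad (q : (ZMod 2)[X]) (hm : q.Monic) (hd : q.natDegree = 2)
    (h : ∀ x : ZMod 2, ¬ q.IsRoot x) : q = X ^ 2 + X + 1 := by
  have hq2 := quad_eq q hm hd
  have e0 : q.eval 0 = q.coeff 0 := by rw [hq2]; simp
  have e1 : q.eval 1 = 1 + q.coeff 1 + q.coeff 0 := by
    rw [hq2]; simp [eval_add, eval_mul, eval_pow]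
  have H0 := h 0
  have H1 := h 1
  rw [IsRoot, e0] at H0
  rw [IsRoot, e1] at H1
  have hcc : q.coeff 0 = 1 ∧ q.coeff 1 = 1 := by
    revert H0 H1
    generalize q.coeff 0 = c
    generalize q.coeff 1 = b
    revert b c
    decide
  rw [hq2, hcc.1, hcc.2, C_1]
  ring

lemma irr_quartic : Irreducible (X ^ 4 + X ^ 3 + X ^ 2 + X + 1 : (ZMod 2)[X]) := by
  set p : (ZMod 2)[X] := X ^ 4 + X ^ 3 + X ^ 2 + X + 1 with hp
  have hm : p.Monic := by rw [hp]; monicity!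
  have hd : p.natDegree = 4 := by rw [hp]; compute_degree!
  have hnr : ∀ x : ZMod 2, ¬ p.IsRoot x := by
    intro x
    simp only [hp, IsRoot, eval_add, eval_pow, eval_X, eval_one]
    revert x; decide
  have hp1 : p ≠ 1 := by
    intro h
    rw [h] at hd
    simp at hd
  rw [hm.irreducible_iff_lt_natDegree_lt hp1]
  intro q hq hdq hdvd
  rw [hd] at hdq
  simp only [Finset.mem_Ioc] at hdq
  have hqr : ∀ x : ZMod 2, ¬ q.IsRoot x := fun x hx => hnr x (hx.dvd hdvd)
  rcases (by omega : q.natDegree = 1 ∨ q.natDegree = 2) with h1 | h2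
  · apply hqr (-(q.coeff 0))
    rw [hq.eq_X_add_C h1]
    simp [IsRoot]
    generalize q.coeff 0 = c; revert c; decide
  · have hq' : q = X ^ 2 + X + 1 := rootless_quad q hq h2 hqr
    obtain ⟨r, hr⟩ := hdvd
    have hrm : r.Monic := hq.of_mul_monic_left (hr ▸ hm)
    have hrd : r.natDegree = 2 := by
      have h4 : p.natDegree = q.natDegree + r.natDegree := by
        rw [hr]
        exact natDegree_mul hq.ne_zero hrm.ne_zero
      omega
    have hrr : ∀ x : ZMod 2, ¬ r.IsRoot x :=
      fun x hx => hnr x (hx.dvd ⟨q, by rw [hr]; ring⟩)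
    have hr' : r = X ^ 2 + X + 1 := rootless_quad r hrm hrd hrr
    have hsq : ((X ^ 2 + X + 1 : (ZMod 2)[X])) * (X ^ 2 + X + 1) = X ^ 4 + X ^ 2 + 1 := by
      linear_combination (X ^ 3 + X ^ 2 + X) * two_eq_zero_poly
    have hfin : p = X ^ 4 + X ^ 2 + 1 := by rw [hr, hq', hr', hsq]
    have hco := congrArg (fun s => Polynomial.coeff s 3) hfin
    simp only [hp, coeff_add, coeff_X_pow, coeff_X, coeff_one] at hco
    norm_num at hco

lemma irr_quad : Irreducible (X ^ 2 + X + 1 : (ZMod 2)[X]) := by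
  set p : (ZMod 2)[X] := X ^ 2 + X + 1 with hp
  have hd : p.natDegree = 2 := by rw [hp]; compute_degree!
  rw [irreducible_iff_roots_eq_zero_of_degree_le_three (by omega) (by omega)]
  rw [Multiset.eq_zero_iff_forall_notMem]
  intro x hx
  rw [mem_roots'] at hx
  have h2 := hx.2
  simp only [hp, IsRoot, eval_add, eval_pow, eval_X, eval_one] at h2
  exact (by decide : ∀ x : ZMod 2, ¬ (x ^ 2 + x + 1 = 0)) x h2

theorem irreducible_one_add_x_mul_iff (ν : ℕ) (hν : 1 ≤ ν) :
    Irreducible (1 + X * (X + 1) ^ (2 ^ ν - 1) : Polynomial (ZMod 2)) ↔ ν = 1 ∨ ν = 2 := by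
  constructor
  · intro hirr
    by_contra hcon
    push_neg at hcon
    have hν3 : 3 ≤ ν := by omega
    set f : (ZMod 2)[X] := 1 + X * (X + 1) ^ (2 ^ ν - 1) with hf
    have hkey : (X + 1) * f = X ^ (2 ^ ν + 1) - 1 := key_identity ν hν
    have hf0 : f ≠ 0 := hirr.ne_zero
    have hXp1 : (X + 1 : (ZMod 2)[X]).Monic := by monicity!
    have hdeg : f.natDegree = 2 ^ ν := by
      have h1 : ((X + 1) * f).natDegree = (X + 1 : (ZMod 2)[X]).natDegree + f.natDegree :=
        natDegree_mul hXp1.ne_zero hf0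
      have h2 : ((X : (ZMod 2)[X]) ^ (2 ^ ν + 1) - 1).natDegree = 2 ^ ν + 1 := by
        rw [← C_1]; exact natDegree_X_pow_sub_C
      have hX1 : (X + 1 : (ZMod 2)[X]).natDegree = 1 := by compute_degree!
      rw [hkey, h2, hX1] at h1
      omega
    have hNdvd : (2 ^ ν + 1) ∣ (2 ^ (2 * ν) - 1) := by
      have h1 : 1 ≤ 2 ^ ν := Nat.one_le_two_pow
      obtain ⟨b, hb⟩ := Nat.exists_eq_add_of_le h1
      refine ⟨2 ^ ν - 1, ?_⟩
      have h2 : 2 ^ (2 * ν) = 2 ^ ν * 2 ^ ν := by rw [two_mul, pow_add]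
      rw [h2, hb]
      have e1 : (1 + b) * (1 + b) = b * b + 2 * b + 1 := by ring
      have e2 : (1 + b + 1) * (1 + b - 1) = b * b + 2 * b := by
        have : 1 + b - 1 = b := by omega
        rw [this]; ring
      omega
    have hdvd : f ∣ (X : (ZMod 2)[X]) ^ (2 ^ (2 * ν)) - X := by
      have d1 : f ∣ (X : (ZMod 2)[X]) ^ (2 ^ ν + 1) - 1 := ⟨X + 1, by rw [← hkey]; ring⟩
      obtain ⟨c, hc⟩ := hNdvd
      have d2 : ((X : (ZMod 2)[X]) ^ (2 ^ ν + 1) - 1) ∣ (X ^ (2 ^ (2 * ν) - 1) - 1) := by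
        rw [hc, pow_mul]
        simpa using sub_dvd_pow_sub_pow ((X : (ZMod 2)[X]) ^ (2 ^ ν + 1)) 1 c
      have d3 : ((X : (ZMod 2)[X]) ^ (2 ^ (2 * ν) - 1) - 1) ∣ (X ^ (2 ^ (2 * ν)) - X) := by
        refine ⟨X, ?_⟩
        have hq1 : 2 ^ (2 * ν) - 1 + 1 = 2 ^ (2 * ν) :=
          Nat.succ_pred_eq_of_pos (Nat.two_pow_pos _)
        rw [sub_mul, one_mul, ← pow_succ, hq1]
      exact d1.trans (d2.trans d3)
    haveI := Fact.mk hirr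
    let pb := AdjoinRoot.powerBasis hf0
    letI : Fintype (AdjoinRoot f) := Module.fintypeOfFintype pb.basis
    have hcard : Fintype.card (AdjoinRoot f) = 2 ^ (2 ^ ν) := by
      have := Module.card_fintype pb.basis
      simpa [pb, ZMod.card, hdeg] using this
    have hroot : (AdjoinRoot.root f) ^ (2 ^ (2 * ν)) = AdjoinRoot.root f := by
      obtain ⟨g, hg⟩ := hdvd
      have h0 : AdjoinRoot.mk f ((X : (ZMod 2)[X]) ^ (2 ^ (2 * ν)) - X) = 0 := by
        rw [hg, map_mul, AdjoinRoot.mk_self, zero_mul]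
      rw [map_sub, map_pow, AdjoinRoot.mk_X] at h0
      exact sub_eq_zero.mp h0
    haveI : CharP (AdjoinRoot f) 2 :=
      charP_of_injective_algebraMap (algebraMap (ZMod 2) (AdjoinRoot f)).injective 2
    have hall : ∀ x : AdjoinRoot f, x ^ (2 ^ (2 * ν)) = x := by
      intro x
      obtain ⟨p, rfl⟩ := AdjoinRoot.mk_surjective x
      have key : (iterateFrobenius (AdjoinRoot f) 2 (2 * ν)) (AdjoinRoot.mk f p)
          = AdjoinRoot.mk f p := by
        rw [← AdjoinRoot.aeval_eq, aeval_def, hom_eval₂]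
        have hcomp : (iterateFrobenius (AdjoinRoot f) 2 (2 * ν)).comp
            (algebraMap (ZMod 2) (AdjoinRoot f)) = algebraMap (ZMod 2) (AdjoinRoot f) := by
          refine RingHom.ext fun a => ?_
          rcases (by decide : ∀ a : ZMod 2, a = 0 ∨ a = 1) a with rfl | rfl <;> simp
        rw [hcomp, iterateFrobenius_def, hroot, ← aeval_def, AdjoinRoot.aeval_eq]
      rw [iterateFrobenius_def] at key
      exact key
    have hdegP : ((X : (AdjoinRoot f)[X]) ^ (2 ^ (2 * ν)) - X).natDegree = 2 ^ (2 * ν) := by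
      have h1 : (1 : ℕ) < 2 ^ (2 * ν) := Nat.one_lt_two_pow (by omega)
      have := natDegree_sub_eq_left_of_natDegree_lt
        (q := (X : (AdjoinRoot f)[X])) (p := X ^ (2 ^ (2 * ν))) ?_
      · rwa [natDegree_X_pow] at this
      · rw [natDegree_X, natDegree_X_pow]; exact h1
    have hP0 : ((X : (AdjoinRoot f)[X]) ^ (2 ^ (2 * ν)) - X) ≠ 0 := by
      intro h0
      rw [h0, natDegree_zero] at hdegP
      have : (1 : ℕ) < 2 ^ (2 * ν) := Nat.one_lt_two_pow (by omega)
      omega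
    have hsub : (Finset.univ : Finset (AdjoinRoot f)) ⊆
        ((X : (AdjoinRoot f)[X]) ^ (2 ^ (2 * ν)) - X).roots.toFinset := by
      intro x _
      rw [Multiset.mem_toFinset, mem_roots hP0]
      simp [IsRoot, hall x]
    have hle : Fintype.card (AdjoinRoot f) ≤ 2 ^ (2 * ν) := by
      calc Fintype.card (AdjoinRoot f) = (Finset.univ : Finset (AdjoinRoot f)).card :=
            Finset.card_univ.symm
        _ ≤ ((X : (AdjoinRoot f)[X]) ^ (2 ^ (2 * ν)) - X).roots.toFinset.card :=
            Finset.card_le_card hsub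
        _ ≤ Multiset.card ((X : (AdjoinRoot f)[X]) ^ (2 ^ (2 * ν)) - X).roots :=
            Multiset.toFinset_card_le _
        _ ≤ ((X : (AdjoinRoot f)[X]) ^ (2 ^ (2 * ν)) - X).natDegree := card_roots' _
        _ = 2 ^ (2 * ν) := hdegP
    rw [hcard] at hle
    have hfin : 2 ^ ν ≤ 2 * ν := (Nat.pow_le_pow_iff_right (by norm_num)).mp hle
    have := two_mul_lt_s12 ν hν3
    omega
  · rintro (rfl | rfl)
    · have h : (1 + X * (X + 1) ^ (2 ^ 1 - 1) : (ZMod 2)[X]) = X ^ 2 + X + 1 := by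
        norm_num; ring
      rw [h]; exact irr_quad
    · have h : (1 + X * (X + 1) ^ (2 ^ 2 - 1) : (ZMod 2)[X]) = X ^ 4 + X ^ 3 + X ^ 2 + X + 1 := by
        norm_num
        linear_combination (X ^ 3 + X ^ 2) * two_eq_zero_poly
      rw [h]; exact irr_quartic
end

section
/- For any m, n ∈ ℕ* and any Mersenne prime polynomial P over F_2, σ(P^{2m}) ≠ σ(x^{2n}) and σ(P^{2m}) ≠ σ((x+1)^{2n}). -/
open Polynomial

private lemma sq_coeff_odd (f : Polynomial (ZMod 2)) {k : ℕ} (hk : ¬ 2 ∣ k) :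
    (f ^ 2).coeff k = 0 := by
  rw [← Polynomial.map_frobenius_expand (p := 2) f, Polynomial.coeff_map,
    Polynomial.coeff_expand (by norm_num), if_neg hk, map_zero]

private lemma natDegree_geom (Q : Polynomial (ZMod 2)) (hQ : Q.Monic)
    (hd : 1 ≤ Q.natDegree) (N : ℕ) (hN : 1 ≤ N) :
    (∑ i ∈ Finset.range (N + 1), Q ^ i).natDegree = N * Q.natDegree := by
  rw [Finset.sum_range_succ]
  have h1 : (∑ i ∈ Finset.range N, Q ^ i).natDegree ≤ (N - 1) * Q.natDegree :=
    Polynomial.natDegree_sum_le_of_forall_le _ _ (fun i hi =>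
      le_trans Polynomial.natDegree_pow_le
        (Nat.mul_le_mul_right _ (by simp only [Finset.mem_range] at hi; omega)))
  have h2 : (N - 1) * Q.natDegree < N * Q.natDegree :=
    (Nat.mul_lt_mul_right (by omega)).mpr (by omega)
  rw [Polynomial.natDegree_add_eq_right_of_natDegree_lt
    (lt_of_le_of_lt h1 (by rwa [hQ.natDegree_pow])), hQ.natDegree_pow]

private lemma coeff_geom (Q : Polynomial (ZMod 2)) (N k : ℕ)
    (h : ∀ i < N, i * Q.natDegree < k) :
    (∑ i ∈ Finset.range (N + 1), Q ^ i).coeff k = (Q ^ N).coeff k := by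
  rw [Polynomial.finset_sum_coeff, Finset.sum_range_succ,
    Finset.sum_eq_zero (fun i hi => Polynomial.coeff_eq_zero_of_natDegree_lt
      (lt_of_le_of_lt Polynomial.natDegree_pow_le (h i (Finset.mem_range.mp hi)))),
    zero_add]

theorem sigma_mersenne_pow_ne (m n : ℕ) (hm : 1 ≤ m) (hn : 1 ≤ n)
    (P : Polynomial (ZMod 2)) (hirr : Irreducible P)
    (hM : ∃ a b : ℕ, 1 ≤ a ∧ 1 ≤ b ∧ P = 1 + X ^ a * (X + 1) ^ b) :
    (∑ i ∈ Finset.range (2 * m + 1), P ^ i) ≠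
      (∑ i ∈ Finset.range (2 * n + 1), (X : Polynomial (ZMod 2)) ^ i) ∧
    (∑ i ∈ Finset.range (2 * m + 1), P ^ i) ≠
      (∑ i ∈ Finset.range (2 * n + 1), ((X : Polynomial (ZMod 2)) + 1) ^ i) := by
  obtain ⟨a, b, ha, hb, hP⟩ := hM
  have hX1m : ((X : Polynomial (ZMod 2)) + 1).Monic := by
    simpa using monic_X_add_C (1 : ZMod 2)
  have hfm : ((X : Polynomial (ZMod 2)) ^ a * (X + 1) ^ b).Monic :=
    (monic_X_pow a).mul (hX1m.pow b)
  have hX1d : ((X : Polynomial (ZMod 2)) + 1).natDegree = 1 := by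
    simpa using natDegree_X_add_C (1 : ZMod 2)
  have hfd : ((X : Polynomial (ZMod 2)) ^ a * (X + 1) ^ b).natDegree = a + b := by
    rw [(monic_X_pow a).natDegree_mul (hX1m.pow b), natDegree_X_pow,
      hX1m.natDegree_pow, hX1d, mul_one]
  have hPd : P.natDegree = a + b := by
    rw [hP, Polynomial.natDegree_add_eq_right_of_natDegree_lt
      (by rw [natDegree_one, hfd]; omega), hfd]
  have hPM : P.Monic := by
    apply Polynomial.monic_of_natDegree_le_of_coeff_eq_one (a + b) (le_of_eq hPd)
    rw [hP, Polynomial.coeff_add]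
    have : (1 : Polynomial (ZMod 2)).coeff (a + b) = 0 := by
      rw [Polynomial.coeff_one, if_neg (by omega)]
    rw [this, zero_add, ← hfd]
    exact hfm.coeff_natDegree
  constructor
  · intro h
    have hdeg := congrArg natDegree h
    rw [natDegree_geom P hPM (by omega) (2 * m) (by omega),
      natDegree_geom X monic_X (by simp) (2 * n) (by omega), hPd, natDegree_X,
      mul_one] at hdeg
    -- hdeg : 2 * m * (a + b) = 2 * n
    have hab2n : a + b ≤ 2 * n := hdeg ▸ Nat.le_mul_of_pos_left _ (by omega)
    have hcoeff := congrArg (fun q => Polynomial.coeff q (2 * n - 1)) h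
    rw [coeff_geom P (2 * m) (2 * n - 1) (fun i hi => by
      rw [hPd]
      calc i * (a + b) ≤ (2 * m - 1) * (a + b) := Nat.mul_le_mul_right _ (by omega)
        _ = 2 * m * (a + b) - 1 * (a + b) := by rw [Nat.sub_mul]
        _ < 2 * n - 1 := by omega)] at hcoeff
    rw [show 2 * m = m * 2 by ring, pow_mul, sq_coeff_odd _ (by omega)] at hcoeff
    rw [Polynomial.finset_sum_coeff] at hcoeff
    simp only [Polynomial.coeff_X_pow, Finset.sum_ite_eq, Finset.mem_range,
      if_pos (by omega : 2 * n - 1 < 2 * n + 1)] at hcoeff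
    exact one_ne_zero hcoeff.symm
  · intro h
    have hdeg := congrArg natDegree h
    rw [natDegree_geom P hPM (by omega) (2 * m) (by omega),
      natDegree_geom _ hX1m (by omega) (2 * n) (by omega), hPd, hX1d,
      mul_one] at hdeg
    have hab2n : a + b ≤ 2 * n := hdeg ▸ Nat.le_mul_of_pos_left _ (by omega)
    have hcoeff := congrArg (fun q => Polynomial.coeff q (2 * n - 1)) h
    rw [coeff_geom P (2 * m) (2 * n - 1) (fun i hi => by
      rw [hPd]
      calc i * (a + b) ≤ (2 * m - 1) * (a + b) := Nat.mul_le_mul_right _ (by omega)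
        _ = 2 * m * (a + b) - 1 * (a + b) := by rw [Nat.sub_mul]
        _ < 2 * n - 1 := by omega)] at hcoeff
    rw [show 2 * m = m * 2 by ring, pow_mul, sq_coeff_odd _ (by omega)] at hcoeff
    rw [show 2 * n + 1 = (2 * n - 1) + 1 + 1 by omega, Finset.sum_range_succ,
      Finset.sum_range_succ, Polynomial.coeff_add, Polynomial.coeff_add,
      Polynomial.finset_sum_coeff,
      Finset.sum_eq_zero (fun i hi => Polynomial.coeff_eq_zero_of_natDegree_lt
        (lt_of_le_of_lt Polynomial.natDegree_pow_le (by
          rw [hX1d, mul_one]; exact Finset.mem_range.mp hi))),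
      Polynomial.coeff_X_add_one_pow, Polynomial.coeff_X_add_one_pow,
      Nat.choose_self] at hcoeff
    have h2n : ((2 * n - 1 + 1).choose (2 * n - 1) : ZMod 2) = 0 := by
      rw [Nat.choose_succ_self_right]
      rw [show 2 * n - 1 + 1 = 2 * n by omega]
      push_cast
      rw [show ((2 : ZMod 2)) = 0 by decide, zero_mul]
    rw [h2n] at hcoeff
    simp at hcoeff
end

section
/- For every n ≥ 1, the polynomial x^{2^n − 1}(x+1)^{2^n − 1} over F_2 is bi-unitary perfect: σ**(x^{2^n−1}(x+1)^{2^n−1}) = x^{2^n−1}(x+1)^{2^n−1}. Also x^2(x+1)^2 is bi-unitary perfect. -/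
open Polynomial

lemma X_add_one_irreducible : Irreducible ((X : Polynomial (ZMod 2)) + 1) := by
  have h := Polynomial.irreducible_X_sub_C (1 : ZMod 2)
  rwa [CharTwo.sub_eq_add, map_one] at h

lemma X_ne_X_add_one : (X : Polynomial (ZMod 2)) ≠ X + 1 := by
  intro h
  rw [left_eq_add] at h
  exact one_ne_zero h

lemma monic_X_add_one : ((X : Polynomial (ZMod 2)) + 1).Monic := by
  simpa using Polynomial.monic_X_add_C (1 : ZMod 2)

open scoped Classical in
lemma sigma_eval (a : ℕ) (ha : a ≠ 0) :
    sigmaStarStar ((X : Polynomial (ZMod 2)) ^ a * (X + 1) ^ a) =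
      sigmaStarStarPow X a * sigmaStarStarPow (X + 1) a := by
  have hX : (X : Polynomial (ZMod 2)) ≠ 0 := X_ne_zero
  have hX1 : (X : Polynomial (ZMod 2)) + 1 ≠ 0 := X_add_one_irreducible.ne_zero
  have hfac : UniqueFactorizationMonoid.normalizedFactors
      ((X : Polynomial (ZMod 2)) ^ a * (X + 1) ^ a) =
      Multiset.replicate a X + Multiset.replicate a (X + 1) := by
    rw [UniqueFactorizationMonoid.normalizedFactors_mul (pow_ne_zero _ hX) (pow_ne_zero _ hX1),
      UniqueFactorizationMonoid.normalizedFactors_pow,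
      UniqueFactorizationMonoid.normalizedFactors_pow,
      UniqueFactorizationMonoid.normalizedFactors_irreducible Polynomial.irreducible_X,
      UniqueFactorizationMonoid.normalizedFactors_irreducible X_add_one_irreducible,
      (Polynomial.monic_X : (X : Polynomial (ZMod 2)).Monic).normalize_eq_self,
      monic_X_add_one.normalize_eq_self]
    simp [Multiset.nsmul_singleton]
  have hne := X_ne_X_add_one
  rw [sigmaStarStar, hfac]
  have htf : (Multiset.replicate a (X : Polynomial (ZMod 2)) +
      Multiset.replicate a (X + 1)).toFinset = {X, X + 1} := by
    ext p
    simp [Multiset.mem_replicate, ha, Finset.mem_insert]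
  rw [htf, Finset.prod_pair hne]
  simp [Multiset.count_replicate, hne, hne.symm]

lemma charP2 : CharP (Polynomial (ZMod 2)) 2 := inferInstance

lemma geom_pow (T : Polynomial (ZMod 2)) (n : ℕ) :
    (∑ i ∈ Finset.range (2 ^ n), T ^ i) = (T + 1) ^ (2 ^ n - 1) := by
  rcases Nat.eq_zero_or_pos n with hn | hn
  · subst hn; simp
  have hn0 : n ≠ 0 := by omega
  rcases eq_or_ne (T + 1) 0 with h0 | h0
  · have hT : T = 1 := by
      have h := eq_neg_of_add_eq_zero_left h0
      rw [h, CharTwo.neg_eq]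
    subst hT
    have hlt : (1:ℕ) < 2 ^ n := Nat.one_lt_two_pow_iff.mpr hn0
    rw [h0, zero_pow (by omega)]
    simp only [one_pow, Finset.sum_const, Finset.card_range, smul_eq_mul, mul_one,
      nsmul_eq_mul]
    exact_mod_cast (CharP.cast_eq_zero_iff (Polynomial (ZMod 2)) 2 (2 ^ n)).mpr
      (dvd_pow_self 2 hn0)
  · apply mul_right_cancel₀ h0
    have h1 : (∑ i ∈ Finset.range (2 ^ n), T ^ i) * (T + 1) = T ^ 2 ^ n + 1 := by
      have := geom_sum_mul T (2 ^ n)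
      rwa [CharTwo.sub_eq_add, CharTwo.sub_eq_add] at this
    rw [h1, ← pow_succ, Nat.sub_add_cancel (Nat.one_le_two_pow)]
    rw [add_pow_char_pow, one_pow]

lemma sigma_odd (T : Polynomial (ZMod 2)) (n : ℕ) (hn : 1 ≤ n) :
    sigmaStarStarPow T (2 ^ n - 1) = (T + 1) ^ (2 ^ n - 1) := by
  have h1 : (1 : ℕ) ≤ 2 ^ n := Nat.one_le_two_pow
  have hn0 : n ≠ 0 := by omega
  have hodd : ¬ Even (2 ^ n - 1) := by
    rw [Nat.even_sub h1, Nat.even_pow]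
    simp [hn0]
  have hne : 2 ^ n - 1 ≠ 0 := by
    have : (2:ℕ) ^ 1 ≤ 2 ^ n := Nat.pow_le_pow_right (by norm_num) hn
    omega
  rw [sigmaStarStarPow, if_neg hne, if_neg hodd, Nat.sub_add_cancel h1, geom_pow]

lemma one_add_X_add_one : (1 : Polynomial (ZMod 2)) + (X + 1) = X := by
  have h2 : (1 : Polynomial (ZMod 2)) + 1 = 0 := by
    have := CharTwo.add_self_eq_zero (1 : Polynomial (ZMod 2))
    simpa using this
  ring_nf
  linear_combination h2

theorem biunitary_perfect_two_factors :
    (∀ n : ℕ, 1 ≤ n →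
      sigmaStarStar (X ^ (2 ^ n - 1) * (X + 1) ^ (2 ^ n - 1)) =
        (X : Polynomial (ZMod 2)) ^ (2 ^ n - 1) * (X + 1) ^ (2 ^ n - 1)) ∧
    sigmaStarStar (X ^ 2 * (X + 1) ^ 2) = (X : Polynomial (ZMod 2)) ^ 2 * (X + 1) ^ 2 := by
  constructor
  · intro n hn
    have hne : 2 ^ n - 1 ≠ 0 := by
      have : (2:ℕ) ^ 1 ≤ 2 ^ n := Nat.pow_le_pow_right (by norm_num) hn
      omega
    rw [sigma_eval _ hne, sigma_odd X n hn, sigma_odd (X + 1) n hn]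
    rw [show (X : Polynomial (ZMod 2)) + 1 + 1 = X by
      linear_combination one_add_X_add_one]
    ring
  · rw [sigma_eval 2 (by norm_num)]
    have hpow : ∀ T : Polynomial (ZMod 2), sigmaStarStarPow T 2 = (1 + T) ^ 2 := by
      intro T
      rw [sigmaStarStarPow, if_neg (by norm_num), if_pos (by norm_num)]
      norm_num [Finset.sum_range_succ]
      ring
    rw [hpow, hpow]
    rw [show (1 : Polynomial (ZMod 2)) + (X + 1) = X from one_add_X_add_one]
    ring
end

section
/- Let P = 1+x+x^2+x^3+x^4 ∈ F_2[x] and Q = 1 + x^5(x+1)^{2^ν−1}P^{2^ν−1} for ν ≥ 1. Then Q is irreducible over F_2 if and only if ν = 2. -/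
open Polynomial


theorem aux_irred_cyclotomic25 : Irreducible (cyclotomic 25 (ZMod 2)) := by
  haveI : Fintype (GaloisField 2 20) := Fintype.ofFinite _
  obtain ⟨g, hg⟩ := IsCyclic.exists_ofOrder_eq_natCard (α := (GaloisField 2 20)ˣ)
  have hcardK : Fintype.card (GaloisField 2 20) = 2 ^ 20 := by
    have := GaloisField.card 2 20 (by norm_num)
    simpa [Nat.card_eq_fintype_card] using this
  haveI : DecidableEq (GaloisField 2 20) := Classical.decEq _
  have hcard : Nat.card (GaloisField 2 20)ˣ = 2 ^ 20 - 1 := by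
    rw [Nat.card_eq_fintype_card, Fintype.card_units, hcardK]
  have hζ : orderOf (g ^ 41943) = 25 := by
    rw [orderOf_pow, hg, hcard]
    norm_num [Nat.gcd_comm]
  set z : GaloisField 2 20 := ((g ^ 41943 : (GaloisField 2 20)ˣ) : GaloisField 2 20) with hz
  have hoz : orderOf z = 25 := by rw [hz, orderOf_units, hζ]
  have hz0 : z ≠ 0 := Units.ne_zero _
  have hprim : IsPrimitiveRoot z 25 := hoz ▸ IsPrimitiveRoot.orderOf z
  have hint : IsIntegral (ZMod 2) z := IsIntegral.of_finite (ZMod 2) z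
  have hroot : (Polynomial.aeval z) (cyclotomic 25 (ZMod 2)) = 0 := by
    rw [aeval_def, ← eval_map, map_cyclotomic]
    exact hprim.isRoot_cyclotomic (by norm_num)
  have hdvd : minpoly (ZMod 2) z ∣ cyclotomic 25 (ZMod 2) := minpoly.dvd _ _ hroot
  set d := (minpoly (ZMod 2) z).natDegree with hd
  have hdle : d ≤ 20 := by
    have := Polynomial.natDegree_le_of_dvd hdvd (cyclotomic_ne_zero 25 (ZMod 2))
    rwa [natDegree_cyclotomic, show Nat.totient 25 = 20 by decide] at this
  -- the subfield generated by z has 2^d elements and contains an element of order 25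
  have h25 : 25 ∣ 2 ^ d - 1 := by
    set F := IntermediateField.adjoin (ZMod 2) {z} with hF
    haveI : Fintype F := Fintype.ofFinite F
    have hfr : Module.finrank (ZMod 2) F = d := IntermediateField.adjoin.finrank hint
    have hcardF : Fintype.card F = 2 ^ d := by
      rw [Module.card_eq_pow_finrank (K := ZMod 2) (V := F), ZMod.card, hfr]
    set gen := IntermediateField.AdjoinSimple.gen (ZMod 2) z with hgen
    have hmapgen : algebraMap F (GaloisField 2 20) gen = z :=
      IntermediateField.AdjoinSimple.algebraMap_gen _ _
    have hogen : orderOf gen = 25 := by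
      have h := orderOf_injective (algebraMap F (GaloisField 2 20)).toMonoidHom
        (algebraMap F (GaloisField 2 20)).injective gen
      simp only [RingHom.toMonoidHom_eq_coe, MonoidHom.coe_coe] at h
      rw [hmapgen] at h
      exact h.symm.trans hoz
    have hgen0 : gen ≠ 0 := by
      intro h
      rw [h, map_zero] at hmapgen
      exact hz0 hmapgen.symm
    have hpow : gen ^ (Fintype.card F - 1) = 1 :=
      FiniteField.pow_card_sub_one_eq_one gen hgen0
    have := orderOf_dvd_of_pow_eq_one hpow
    rwa [hogen, hcardF] at this
  have hd1 : 0 < d := minpoly.natDegree_pos hint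
  have hd20 : d = 20 := by
    interval_cases d <;> first | rfl | (exfalso; revert h25; decide)
  -- conclude minpoly = cyclotomic
  obtain ⟨c, hc⟩ := hdvd
  have hmin0 : minpoly (ZMod 2) z ≠ 0 := minpoly.ne_zero hint
  have hc0 : c ≠ 0 := by
    rintro rfl
    rw [mul_zero] at hc
    exact cyclotomic_ne_zero 25 (ZMod 2) hc
  have hdegc : c.natDegree = 0 := by
    have := congrArg natDegree hc
    rw [natDegree_mul hmin0 hc0, natDegree_cyclotomic, show Nat.totient 25 = 20 by decide,
      ← hd, hd20] at this
    omega
  have hlc : c.leadingCoeff = 1 := by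
    have := congrArg leadingCoeff hc
    rw [leadingCoeff_mul, (cyclotomic.monic 25 (ZMod 2)).leadingCoeff,
      (minpoly.monic hint).leadingCoeff, one_mul] at this
    exact this.symm
  have hc1 : c = 1 := by
    rw [Polynomial.eq_C_of_natDegree_eq_zero hdegc]
    rw [Polynomial.eq_C_of_natDegree_eq_zero hdegc, leadingCoeff_C] at hlc
    rw [hlc, map_one]
  rw [hc1, mul_one] at hc
  exact hc ▸ minpoly.irreducible hint


theorem irreducible_Q_iff (ν : ℕ) (hν : 1 ≤ ν) :
    Irreducible (1 + X ^ 5 * (X + 1) ^ (2 ^ ν - 1) *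
        (1 + X + X ^ 2 + X ^ 3 + X ^ 4 : Polynomial (ZMod 2)) ^ (2 ^ ν - 1)) ↔ ν = 2 := by
  have h2 : (2 : Polynomial (ZMod 2)) = 0 := by
    exact_mod_cast CharP.cast_eq_zero (Polynomial (ZMod 2)) 2
  set P : Polynomial (ZMod 2) := 1 + X + X ^ 2 + X ^ 3 + X ^ 4 with hP
  set k := 2 ^ ν - 1 with hk
  set Q : Polynomial (ZMod 2) := 1 + X ^ 5 * (X + 1) ^ k * P ^ k with hQdef
  set m := 2 ^ ν + 1 with hm
  have hm3 : 3 ≤ m := by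
    have : 2 ≤ 2 ^ ν := Nat.one_lt_two_pow_iff.mpr (by omega)
    omega
  have hXP : (X + 1) * P = X ^ 5 + 1 := by
    rw [hP]; linear_combination (X + X^2 + X^3 + X^4 : Polynomial (ZMod 2)) * h2
  -- main identity : Q * (X^5+1) = X^(5m) + 1
  have key : Q * (X ^ 5 + 1) = X ^ (5 * m) + 1 := by
    have e1 : (X + 1) ^ k * P ^ k = ((X:Polynomial (ZMod 2)) ^ 5 + 1) ^ k := by
      rw [← mul_pow, hXP]
    have e2 : Q * (X ^ 5 + 1) = (X ^ 5 + 1) + X ^ 5 * ((X:Polynomial (ZMod 2)) ^ 5 + 1) ^ (k + 1) := by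
      rw [hQdef, mul_assoc, e1]; ring
    have hk1 : k + 1 = 2 ^ ν := by
      have : 1 ≤ 2 ^ ν := Nat.one_le_two_pow
      omega
    have e3 : ((X:Polynomial (ZMod 2)) ^ 5 + 1) ^ (k+1) = X ^ (5 * 2 ^ ν) + 1 := by
      rw [hk1, add_pow_char_pow, one_pow, ← pow_mul]
    rw [e2, e3, hm]
    have : (5 : ℕ) * (2 ^ ν + 1) = 5 * 2 ^ ν + 5 := by ring
    rw [this, pow_add]
    linear_combination (X^5 : Polynomial (ZMod 2)) * h2
  have hXn1 : ∀ n : ℕ, 0 < n → ((X:Polynomial (ZMod 2)) ^ n + 1) ≠ 0 := by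
    intro n hn
    simpa using X_pow_add_C_ne_zero (R := ZMod 2) hn (1 : ZMod 2)
  have hX5 : ((X:Polynomial (ZMod 2)) ^ 5 + 1) ≠ 0 := hXn1 5 (by norm_num)
  have hX5m : ((X:Polynomial (ZMod 2)) ^ (5*m) + 1) ≠ 0 := hXn1 (5*m) (by omega)
  have hQ0 : Q ≠ 0 := by
    intro h; rw [h, zero_mul] at key; exact hX5m key.symm
  have hdegQ : Q.natDegree + 5 = 5 * m := by
    have := congrArg natDegree key
    rwa [natDegree_mul hQ0 hX5, show ((X:Polynomial (ZMod 2))^5+1) = X^5 + C 1 by simp,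
      natDegree_X_pow_add_C, show ((X:Polynomial (ZMod 2))^(5*m)+1) = X^(5*m) + C 1 by simp,
      natDegree_X_pow_add_C] at this
  constructor
  · -- irreducible → ν = 2
    intro hirr
    by_contra hne
    rcases eq_or_ne ν 1 with h1 | hν1
    · -- explicit factorization for ν = 1
      subst h1
      have hQ1 : Q = (X^2+X+1) * (1+X+X^3+X^4+X^5+X^7+X^8) := by
        rw [hQdef, hP, hk]
        norm_num
        linear_combination (-(X+X^2+X^3+X^4+X^5) : Polynomial (ZMod 2)) * h2
      rcases hirr.isUnit_or_isUnit hQ1 with h | h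
      · refine (Polynomial.not_isUnit_of_natDegree_pos _ ?_) h
        have : (X^2+X+1 : Polynomial (ZMod 2)).natDegree = 2 := by compute_degree!
        omega
      · refine (Polynomial.not_isUnit_of_natDegree_pos _ ?_) h
        have : (1+X+X^3+X^4+X^5+X^7+X^8 : Polynomial (ZMod 2)).natDegree = 8 := by compute_degree!
        omega
    · -- ν ≥ 2, ν ≠ 2 : degree argument
      have hm5 : 5 ≤ m := by
        have : 4 ≤ 2 ^ ν := by
          calc (4:ℕ) = 2^2 := rfl
          _ ≤ 2 ^ ν := Nat.pow_le_pow_right (by norm_num) (by omega)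
        omega
      set T : Polynomial (ZMod 2) := ∑ i ∈ Finset.range m, X ^ i with hT
      set U : Polynomial (ZMod 2) := ∑ i ∈ Finset.range 5, (X ^ m) ^ i with hU
      have hTid : T * (X + 1) = X ^ m + 1 := by
        have := geom_sum_mul (X : Polynomial (ZMod 2)) m
        rwa [CharTwo.sub_eq_add, CharTwo.sub_eq_add] at this
      have hUid : U * (X ^ m + 1) = X ^ (5 * m) + 1 := by
        have := geom_sum_mul ((X : Polynomial (ZMod 2)) ^ m) 5
        rwa [CharTwo.sub_eq_add, CharTwo.sub_eq_add, ← pow_mul, mul_comm m 5] at this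
      have hfact : X ^ (5*m) + 1 = Q * (X ^ 5 + 1) := key.symm
      have hdvd : Q ∣ (X + 1) * (T * U) := by
        refine Dvd.dvd.trans ⟨X ^ 5 + 1, key.symm⟩ ?_
        rw [← hUid, ← hTid]; ring_nf; exact dvd_refl _
      have hprime : Prime Q := (irreducible_iff_prime.mp hirr)
      have hT0 : T ≠ 0 := by
        intro h; rw [h, zero_mul] at hTid
        exact hXn1 m (by omega) hTid.symm
      have hU0 : U ≠ 0 := by
        intro h; rw [h, zero_mul] at hUid
        exact hX5m hUid.symm
      have hdegT : T.natDegree + 1 = m := by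
        have := congrArg natDegree hTid
        rwa [natDegree_mul hT0 (by simpa using hXn1 1 one_pos),
          show ((X:Polynomial (ZMod 2)) + 1) = X^1 + C 1 by simp, natDegree_X_pow_add_C,
          show ((X:Polynomial (ZMod 2))^m+1) = X^m + C 1 by simp, natDegree_X_pow_add_C] at this
      have hdegU : U.natDegree + m = 5 * m := by
        have := congrArg natDegree hUid
        rwa [natDegree_mul hU0 (hXn1 m (by omega)),
          show ((X:Polynomial (ZMod 2))^m+1) = X^m + C 1 by simp, natDegree_X_pow_add_C,
          show ((X:Polynomial (ZMod 2))^(5*m)+1) = X^(5*m) + C 1 by simp, natDegree_X_pow_add_C] at this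
      rcases (hprime.dvd_mul.mp hdvd) with h | h
      · have := Polynomial.natDegree_le_of_dvd h (by simpa using hXn1 1 one_pos)
        have : Q.natDegree ≤ 1 := le_trans this (by
          simp [show ((X:Polynomial (ZMod 2)) + 1) = X^1 + C 1 by simp, natDegree_X_pow_add_C])
        omega
      rcases (hprime.dvd_mul.mp h) with h | h
      · have := Polynomial.natDegree_le_of_dvd h hT0
        omega
      · have := Polynomial.natDegree_le_of_dvd h hU0
        -- 5m - 5 ≤ 4m → m ≤ 5 → m = 5 → 2^ν = 4 → ν = 2
        have hm5' : m = 5 := by omega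
        have : 2 ^ ν = 4 := by omega
        have : ν = 2 := by
          have h4 : (2:ℕ) ^ ν = 2 ^ 2 := by norm_num [this]
          exact Nat.pow_right_injective (le_refl 2) h4
        exact hne this
  · -- ν = 2 → irreducible
    rintro rfl
    haveI : Fact (Nat.Prime 5) := ⟨by norm_num⟩
    have hc := cyclotomic_prime_pow_mul_X_pow_sub_one (ZMod 2) 5 1
    rw [CharTwo.sub_eq_add, CharTwo.sub_eq_add] at hc
    norm_num at hc
    have key' : Q * (X ^ 5 + 1) = X ^ 25 + 1 := by
      rw [key]; norm_num [hm]
    have hQc : Q = cyclotomic 25 (ZMod 2) :=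
      mul_right_cancel₀ hX5 (key'.trans hc.symm)
    rw [hQc]
    exact aux_irred_cyclotomic25
end
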